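/- arXiv:1605.03864 — 2 statements merged into one kernel-verified Lean document; each statement's English description precedes it below -/
import Mathlib

section
/- Let f : (0,∞) → ℝ be a nonnegative function in L²(0,∞). Then lim_{t→∞} (1/t) ∫₀ᵗ ∫₀ˢ (s-τ)^{-1/2} f(τ) dτ ds = 0. -/
open MeasureTheory Filter Set
open scoped ENNReal


lemma auxJ (τ t : ℝ) (h : τ ≤ t) :
    ∫⁻ s in Set.Ioc τ t, ENNReal.ofReal ((s - τ) ^ (-(1/2):ℝ)) =
      ENNReal.ofReal (2 * (t - τ) ^ ((1/2):ℝ)) := by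
  have hint : IntegrableOn (fun s => (s - τ) ^ (-(1/2):ℝ)) (Set.Ioc τ t) := by
    have h1 : IntervalIntegrable (fun x : ℝ => x ^ (-(1/2):ℝ)) volume 0 (t - τ) :=
      intervalIntegral.intervalIntegrable_rpow' (by norm_num)
    have h2 := h1.comp_sub_right τ
    simp only [zero_add, sub_add_cancel] at h2
    rwa [intervalIntegrable_iff_integrableOn_Ioc_of_le h] at h2
  rw [← ofReal_integral_eq_lintegral_ofReal hint ?_]
  · congr 1
    rw [← intervalIntegral.integral_of_le h,
      intervalIntegral.integral_comp_sub_right (fun x => x ^ (-(1/2):ℝ)) τ]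
    rw [sub_self, integral_rpow (Or.inl (by norm_num))]
    rw [Real.zero_rpow (by norm_num)]
    norm_num
    ring
  · filter_upwards [ae_restrict_mem measurableSet_Ioc] with s hs
    exact Real.rpow_nonneg (by linarith [hs.1]) _

lemma auxFubini (f : ℝ → ℝ) (hmeas : Measurable f)
    (hpos : ∀ τ ∈ Set.Ioi (0:ℝ), 0 ≤ f τ) (t : ℝ) :
    ∫⁻ s in Set.Ioc (0:ℝ) t, ∫⁻ τ in Set.Ioc (0:ℝ) s,
        ENNReal.ofReal ((s - τ) ^ (-(1/2):ℝ) * f τ) =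
      ∫⁻ τ in Set.Ioc (0:ℝ) t, ENNReal.ofReal (2 * (t - τ) ^ ((1/2):ℝ) * f τ) := by
  set K : ℝ × ℝ → ℝ≥0∞ := fun p =>
    Set.indicator {q : ℝ × ℝ | 0 < q.2 ∧ q.2 ≤ q.1 ∧ q.1 ≤ t}
      (fun q => ENNReal.ofReal ((q.1 - q.2) ^ (-(1/2):ℝ) * f q.2)) p with hK
  have hSmeas : MeasurableSet {q : ℝ × ℝ | 0 < q.2 ∧ q.2 ≤ q.1 ∧ q.1 ≤ t} := by
    apply MeasurableSet.inter
    · exact measurableSet_lt measurable_const measurable_snd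
    apply MeasurableSet.inter
    · exact measurableSet_le measurable_snd measurable_fst
    · exact measurableSet_le measurable_fst measurable_const
  have hKmeas : Measurable K := by
    apply Measurable.indicator _ hSmeas
    apply Measurable.ennreal_ofReal
    exact Measurable.mul ((measurable_fst.sub measurable_snd).pow_const _) (hmeas.comp measurable_snd)
  -- step 1: LHS = full double lintegral of K
  have step1 : ∫⁻ s in Set.Ioc (0:ℝ) t, ∫⁻ τ in Set.Ioc (0:ℝ) s,
      ENNReal.ofReal ((s - τ) ^ (-(1/2):ℝ) * f τ) = ∫⁻ s, ∫⁻ τ, K (s, τ) := by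
    have h1 : ∀ s ∈ Set.Ioc (0:ℝ) t,
        (∫⁻ τ in Set.Ioc (0:ℝ) s, ENNReal.ofReal ((s - τ) ^ (-(1/2):ℝ) * f τ))
          = ∫⁻ τ, K (s, τ) := by
      intro s hs
      have : (fun τ => K (s, τ)) = (Set.Ioc (0:ℝ) s).indicator
          (fun τ => ENNReal.ofReal ((s - τ) ^ (-(1/2):ℝ) * f τ)) := by
        funext τ
        simp only [hK, Set.indicator, Set.mem_setOf_eq, Set.mem_Ioc]
        by_cases h : 0 < τ ∧ τ ≤ s
        · simp [h.1, h.2, hs.2]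
        · simp only [h, if_false]
          rw [if_neg]
          tauto
      rw [this, lintegral_indicator measurableSet_Ioc]
    rw [setLIntegral_congr_fun measurableSet_Ioc h1]
    rw [← lintegral_indicator measurableSet_Ioc]
    congr 1
    funext s
    rw [Set.indicator_apply]
    by_cases hs : s ∈ Set.Ioc (0:ℝ) t
    · rw [if_pos hs]
    · rw [if_neg hs]
      symm
      have hz : (fun τ => K (s, τ)) = fun _ => 0 := by
        funext τ
        simp only [hK, Set.indicator, Set.mem_setOf_eq]
        rw [if_neg]
        intro ⟨h1', h2', h3'⟩
        simp only [Set.mem_Ioc, not_and_or, not_lt, not_le] at hs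
        rcases hs with hs | hs
        · linarith
        · linarith
      rw [hz, lintegral_zero]
  -- step 2: swap
  have step2 : ∫⁻ s, ∫⁻ τ, K (s, τ) = ∫⁻ τ, ∫⁻ s, K (s, τ) :=
    lintegral_lintegral_swap hKmeas.aemeasurable
  -- step 3: compute the inner integral over s
  have step3 : ∫⁻ τ, ∫⁻ s, K (s, τ) =
      ∫⁻ τ in Set.Ioc (0:ℝ) t, ENNReal.ofReal (2 * (t - τ) ^ ((1/2):ℝ) * f τ) := by
    have h1 : ∀ τ ∈ Set.Ioc (0:ℝ) t, (∫⁻ s, K (s, τ))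
        = ENNReal.ofReal (2 * (t - τ) ^ ((1/2):ℝ) * f τ) := by
      intro τ hτ
      have hEq : (fun s => K (s, τ)) = (Set.Icc τ t).indicator
          (fun s => ENNReal.ofReal ((s - τ) ^ (-(1/2):ℝ) * f τ)) := by
        funext s
        simp only [hK, Set.indicator, Set.mem_setOf_eq, Set.mem_Icc]
        by_cases h : τ ≤ s ∧ s ≤ t
        · simp [h.1, h.2, hτ.1]
        · simp only [h, if_false]
          rw [if_neg]
          tauto
      rw [hEq, lintegral_indicator measurableSet_Icc]
      rw [← setLIntegral_congr (Ioc_ae_eq_Icc (α := ℝ))]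
      have h2 : ∀ᵐ s ∂(volume.restrict (Set.Ioc τ t)),
          ENNReal.ofReal ((s - τ) ^ (-(1/2):ℝ) * f τ)
            = ENNReal.ofReal ((s - τ) ^ (-(1/2):ℝ)) * ENNReal.ofReal (f τ) := by
        filter_upwards [ae_restrict_mem measurableSet_Ioc] with s hs
        exact ENNReal.ofReal_mul (Real.rpow_nonneg (by linarith [hs.1]) _)
      rw [lintegral_congr_ae h2, lintegral_mul_const _
        (((measurable_id'.sub_const τ).pow_const _).ennreal_ofReal), auxJ τ t hτ.2]
      rw [← ENNReal.ofReal_mul (mul_nonneg (by norm_num) (Real.rpow_nonneg (by linarith [hτ.2]) _))]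
    rw [← setLIntegral_congr_fun measurableSet_Ioc h1]
    rw [← lintegral_indicator measurableSet_Ioc]
    congr 1
    funext τ
    rw [Set.indicator_apply]
    by_cases hτ : τ ∈ Set.Ioc (0:ℝ) t
    · rw [if_pos hτ]
    · rw [if_neg hτ]
      symm
      have hz : (fun s => K (s, τ)) = fun _ => 0 := by
        funext s
        simp only [hK, Set.indicator, Set.mem_setOf_eq]
        rw [if_neg]
        intro ⟨h1', h2', h3'⟩
        simp only [Set.mem_Ioc, not_and_or, not_lt, not_le] at hτ
        rcases hτ with hτ | hτ
        · linarith
        · linarith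
      rw [hz, lintegral_zero]
  rw [step1, step2, step3]


lemma auxIntOn (f : ℝ → ℝ) (hmeas : Measurable f)
    (hL2 : IntegrableOn (fun τ => (f τ) ^ 2) (Set.Ioi (0:ℝ))) (A : ℝ) :
    IntegrableOn f (Set.Ioc (0:ℝ) A) := by
  apply Integrable.mono' (g := fun τ => (f τ ^ 2 + 1) / 2)
  · exact ((hL2.mono_set Set.Ioc_subset_Ioi_self).add
      (integrableOn_const measure_Ioc_lt_top.ne)).div_const 2
  · exact hmeas.aestronglyMeasurable
  · apply ae_of_all
    intro τ
    rw [Real.norm_eq_abs]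
    nlinarith [sq_nonneg (|f τ| - 1), sq_abs (f τ)]

-- inner Bochner = toReal of inner lintegral, for every s
lemma auxInner (f : ℝ → ℝ) (hmeas : Measurable f)
    (hpos : ∀ τ ∈ Set.Ioi (0:ℝ), 0 ≤ f τ) (s : ℝ) :
    ∫ τ in Set.Ioc (0:ℝ) s, (s - τ) ^ (-(1/2):ℝ) * f τ =
      (∫⁻ τ in Set.Ioc (0:ℝ) s, ENNReal.ofReal ((s - τ) ^ (-(1/2):ℝ) * f τ)).toReal := by
  apply integral_eq_lintegral_of_nonneg_ae
  · filter_upwards [ae_restrict_mem measurableSet_Ioc] with τ hτ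
    exact mul_nonneg (Real.rpow_nonneg (by linarith [hτ.2]) _) (hpos τ hτ.1)
  · exact (((measurable_const.sub measurable_id').pow_const _).mul
      hmeas).aestronglyMeasurable

lemma auxMeasI (f : ℝ → ℝ) (hmeas : Measurable f) :
    Measurable (fun s : ℝ =>
      ∫⁻ τ in Set.Ioc (0:ℝ) s, ENNReal.ofReal ((s - τ) ^ (-(1/2):ℝ) * f τ)) := by
  have h : (fun s : ℝ =>
      ∫⁻ τ in Set.Ioc (0:ℝ) s, ENNReal.ofReal ((s - τ) ^ (-(1/2):ℝ) * f τ)) =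
      fun s => ∫⁻ τ, Set.indicator {q : ℝ × ℝ | 0 < q.2 ∧ q.2 ≤ q.1}
        (fun q => ENNReal.ofReal ((q.1 - q.2) ^ (-(1/2):ℝ) * f q.2)) (s, τ) := by
    funext s
    have : (fun τ => Set.indicator {q : ℝ × ℝ | 0 < q.2 ∧ q.2 ≤ q.1}
        (fun q => ENNReal.ofReal ((q.1 - q.2) ^ (-(1/2):ℝ) * f q.2)) (s, τ)) =
        (Set.Ioc (0:ℝ) s).indicator
          (fun τ => ENNReal.ofReal ((s - τ) ^ (-(1/2):ℝ) * f τ)) := by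
      funext τ
      simp only [Set.indicator, Set.mem_setOf_eq, Set.mem_Ioc]
    rw [this, lintegral_indicator measurableSet_Ioc]
  rw [h]
  apply Measurable.lintegral_prod_right'
  apply Measurable.indicator _ ((measurableSet_lt measurable_const measurable_snd).inter
    (measurableSet_le measurable_snd measurable_fst))
  exact (((measurable_fst.sub measurable_snd).pow_const _).mul
    (hmeas.comp measurable_snd)).ennreal_ofReal


lemma auxFin (f : ℝ → ℝ) (hmeas : Measurable f)
    (hpos : ∀ τ ∈ Set.Ioi (0:ℝ), 0 ≤ f τ)
    (hL2 : IntegrableOn (fun τ => (f τ) ^ 2) (Set.Ioi (0:ℝ))) (t : ℝ) :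
    ∫⁻ τ in Set.Ioc (0:ℝ) t, ENNReal.ofReal (2 * (t - τ) ^ ((1/2):ℝ) * f τ) ≠ ∞ := by
  have hbd : ∫⁻ τ in Set.Ioc (0:ℝ) t, ENNReal.ofReal (2 * (t - τ) ^ ((1/2):ℝ) * f τ)
      ≤ ∫⁻ τ in Set.Ioc (0:ℝ) t,
        ENNReal.ofReal (2 * t ^ ((1/2):ℝ) * ((f τ ^ 2 + 1) / 2)) := by
    apply lintegral_mono_ae
    filter_upwards [ae_restrict_mem measurableSet_Ioc] with τ hτ
    apply ENNReal.ofReal_le_ofReal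
    have h1 : (t - τ) ^ ((1/2):ℝ) ≤ t ^ ((1/2):ℝ) :=
      Real.rpow_le_rpow (by linarith [hτ.1, hτ.2]) (by linarith [hτ.1]) (by norm_num)
    have h2 : (0:ℝ) ≤ (t - τ) ^ ((1/2):ℝ) := Real.rpow_nonneg (by linarith [hτ.2]) _
    have h3 : 0 ≤ f τ := hpos τ hτ.1
    have h4 : f τ ≤ (f τ ^ 2 + 1) / 2 := by nlinarith [sq_nonneg (f τ - 1)]
    nlinarith
  have hInt : Integrable (fun τ => 2 * t ^ ((1/2):ℝ) * ((f τ ^ 2 + 1) / 2))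
      (volume.restrict (Set.Ioc (0:ℝ) t)) := by
    exact (((hL2.mono_set Set.Ioc_subset_Ioi_self).add
      (integrableOn_const measure_Ioc_lt_top.ne)).div_const 2).const_mul _
  exact (lt_of_le_of_lt hbd hInt.lintegral_lt_top).ne

lemma auxOuter (f : ℝ → ℝ) (hmeas : Measurable f)
    (hpos : ∀ τ ∈ Set.Ioi (0:ℝ), 0 ≤ f τ)
    (hL2 : IntegrableOn (fun τ => (f τ) ^ 2) (Set.Ioi (0:ℝ))) (t : ℝ) :
    ∫ s in Set.Ioc (0:ℝ) t, ∫ τ in Set.Ioc (0:ℝ) s, (s - τ) ^ (-(1/2):ℝ) * f τ =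
      (∫⁻ τ in Set.Ioc (0:ℝ) t,
        ENNReal.ofReal (2 * (t - τ) ^ ((1/2):ℝ) * f τ)).toReal := by
  have hfin : ∫⁻ s in Set.Ioc (0:ℝ) t, ∫⁻ τ in Set.Ioc (0:ℝ) s,
      ENNReal.ofReal ((s - τ) ^ (-(1/2):ℝ) * f τ) ≠ ∞ := by
    rw [auxFubini f hmeas hpos t]; exact auxFin f hmeas hpos hL2 t
  have hae : ∀ᵐ s ∂(volume.restrict (Set.Ioc (0:ℝ) t)),
      (∫⁻ τ in Set.Ioc (0:ℝ) s, ENNReal.ofReal ((s - τ) ^ (-(1/2):ℝ) * f τ)) < ∞ :=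
    ae_lt_top (auxMeasI f hmeas) hfin
  calc ∫ s in Set.Ioc (0:ℝ) t, ∫ τ in Set.Ioc (0:ℝ) s, (s - τ) ^ (-(1/2):ℝ) * f τ
      = ∫ s in Set.Ioc (0:ℝ) t, (∫⁻ τ in Set.Ioc (0:ℝ) s,
          ENNReal.ofReal ((s - τ) ^ (-(1/2):ℝ) * f τ)).toReal := by
        exact integral_congr_ae (ae_of_all _ (fun s => auxInner f hmeas hpos s))
    _ = (∫⁻ s in Set.Ioc (0:ℝ) t, ENNReal.ofReal ((∫⁻ τ in Set.Ioc (0:ℝ) s,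
          ENNReal.ofReal ((s - τ) ^ (-(1/2):ℝ) * f τ)).toReal)).toReal := by
        apply integral_eq_lintegral_of_nonneg_ae
        · exact ae_of_all _ (fun s => ENNReal.toReal_nonneg)
        · exact (auxMeasI f hmeas).ennreal_toReal.aestronglyMeasurable
    _ = (∫⁻ s in Set.Ioc (0:ℝ) t, ∫⁻ τ in Set.Ioc (0:ℝ) s,
          ENNReal.ofReal ((s - τ) ^ (-(1/2):ℝ) * f τ)).toReal := by
        congr 1
        apply lintegral_congr_ae
        filter_upwards [hae] with s hs
        exact ENNReal.ofReal_toReal hs.ne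
    _ = _ := by rw [auxFubini f hmeas hpos t]

lemma auxTail (f : ℝ → ℝ) (hmeas : Measurable f)
    (hL2 : IntegrableOn (fun τ => (f τ) ^ 2) (Set.Ioi (0:ℝ)))
    (δ : ℝ≥0∞) (hδ : 0 < δ) :
    ∃ A : ℝ, 0 ≤ A ∧ ∫⁻ τ in Set.Ioi A, ENNReal.ofReal (f τ ^ 2) ≤ δ := by
  set g : ℝ → ℝ≥0∞ := (Set.Ioi (0:ℝ)).indicator (fun τ => ENNReal.ofReal (f τ ^ 2))
    with hg
  set ν := volume.withDensity g with hν
  have hgmeas : Measurable g :=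
    Measurable.indicator ((hmeas.pow_const 2).ennreal_ofReal) measurableSet_Ioi
  have happ : ∀ A : ℝ, 0 ≤ A → ν (Set.Ioi A) = ∫⁻ τ in Set.Ioi A,
      ENNReal.ofReal (f τ ^ 2) := by
    intro A hA
    rw [hν, withDensity_apply _ measurableSet_Ioi]
    apply setLIntegral_congr_fun measurableSet_Ioi
    intro τ hτ
    rw [hg, Set.indicator_of_mem (by exact lt_of_le_of_lt hA hτ)]
  have hfin : ν (Set.Ioi (0:ℝ)) ≠ ∞ := by
    rw [happ 0 le_rfl]
    exact hL2.lintegral_lt_top.ne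
  have hiInter : ⋂ n : ℕ, Set.Ioi ((n:ℝ)) = ∅ := by
    ext x
    simp only [Set.mem_iInter, Set.mem_Ioi, Set.mem_empty_iff_false, iff_false, not_forall,
      not_lt]
    obtain ⟨n, hn⟩ := exists_nat_gt x
    exact ⟨n, hn.le⟩
  have htend : Tendsto (fun n : ℕ => ν (Set.Ioi ((n:ℝ)))) atTop (nhds 0) := by
    have := tendsto_measure_iInter_atTop (μ := ν) (s := fun n : ℕ => Set.Ioi ((n:ℝ)))
      (fun n => measurableSet_Ioi.nullMeasurableSet)
      (fun n m hnm => Set.Ioi_subset_Ioi (by exact_mod_cast hnm))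
      ⟨0, by simpa using hfin⟩
    rwa [hiInter, measure_empty] at this
  obtain ⟨n, hn⟩ := (htend.eventually_lt_const hδ).exists
  refine ⟨n, Nat.cast_nonneg n, ?_⟩
  rw [← happ n (Nat.cast_nonneg n)]
  exact hn.le


/-- Lemma 6 (limit-zero): for a nonnegative function `f ∈ L²(0,∞)`,
`(1/t) ∫₀ᵗ ∫₀ˢ (s-τ)^{-1/2} f(τ) dτ ds → 0` as `t → ∞`. -/
theorem stmt0 (f : ℝ → ℝ) (hmeas : Measurable f)
    (hpos : ∀ τ ∈ Set.Ioi (0:ℝ), 0 ≤ f τ)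
    (hL2 : IntegrableOn (fun τ => (f τ) ^ 2) (Set.Ioi (0:ℝ))) :
    Tendsto (fun t : ℝ =>
        (1 / t) * ∫ s in Set.Ioc (0:ℝ) t,
          ∫ τ in Set.Ioc (0:ℝ) s, (s - τ) ^ (-(1/2) : ℝ) * f τ)
      atTop (nhds 0) := by
  rw [NormedAddCommGroup.tendsto_nhds_zero]
  intro ε hε
  obtain ⟨A, hA0, hAδ⟩ := auxTail f hmeas hL2 (ENNReal.ofReal ((ε/4)^2))
    (by positivity)
  set C : ℝ≥0∞ := ∫⁻ τ in Set.Ioc (0:ℝ) A, ENNReal.ofReal (f τ) with hCdef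
  have hCne : C ≠ ∞ := (auxIntOn f hmeas hL2 A).lintegral_lt_top.ne
  set c : ℝ := C.toReal with hcdef
  have hc0 : 0 ≤ c := ENNReal.toReal_nonneg
  filter_upwards [eventually_ge_atTop (max A 1),
    eventually_gt_atTop ((4*c/ε)^2)] with t ht1 ht2
  have htpos : (0:ℝ) < t := lt_of_lt_of_le one_pos ((le_max_right A 1).trans ht1)
  have hAt : A ≤ t := (le_max_left A 1).trans ht1
  rw [auxOuter f hmeas hpos hL2 t]
  set L := ∫⁻ τ in Set.Ioc (0:ℝ) t, ENNReal.ofReal (2 * (t - τ) ^ ((1/2):ℝ) * f τ)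
    with hLdef
  -- split
  have hsplit : L = (∫⁻ τ in Set.Ioc (0:ℝ) A,
        ENNReal.ofReal (2 * (t - τ) ^ ((1/2):ℝ) * f τ)) +
      ∫⁻ τ in Set.Ioc A t, ENNReal.ofReal (2 * (t - τ) ^ ((1/2):ℝ) * f τ) := by
    rw [hLdef, ← Set.Ioc_union_Ioc_eq_Ioc hA0 hAt,
      lintegral_union measurableSet_Ioc (Set.Ioc_disjoint_Ioc_of_le le_rfl)]
  -- bound first piece
  have hL1 : (∫⁻ τ in Set.Ioc (0:ℝ) A,
      ENNReal.ofReal (2 * (t - τ) ^ ((1/2):ℝ) * f τ)) ≤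
      ENNReal.ofReal (2 * t ^ ((1/2):ℝ)) * C := by
    calc (∫⁻ τ in Set.Ioc (0:ℝ) A, ENNReal.ofReal (2 * (t - τ) ^ ((1/2):ℝ) * f τ))
        ≤ ∫⁻ τ in Set.Ioc (0:ℝ) A,
          ENNReal.ofReal (2 * t ^ ((1/2):ℝ)) * ENNReal.ofReal (f τ) := by
          apply lintegral_mono_ae
          filter_upwards [ae_restrict_mem measurableSet_Ioc] with τ hτ
          rw [← ENNReal.ofReal_mul (by positivity)]
          apply ENNReal.ofReal_le_ofReal
          have h1 : (t - τ) ^ ((1/2):ℝ) ≤ t ^ ((1/2):ℝ) :=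
            Real.rpow_le_rpow (by linarith [hτ.1, hτ.2, hAt]) (by linarith [hτ.1])
              (by norm_num)
          have h3 : 0 ≤ f τ := hpos τ hτ.1
          nlinarith [Real.rpow_nonneg (show (0:ℝ) ≤ t - τ by linarith [hτ.2, hAt]) ((1/2):ℝ)]
      _ = ENNReal.ofReal (2 * t ^ ((1/2):ℝ)) * C := by
          rw [hCdef, lintegral_const_mul _ hmeas.ennreal_ofReal]
  -- bound second piece
  have hL2' : (∫⁻ τ in Set.Ioc A t,
      ENNReal.ofReal (2 * (t - τ) ^ ((1/2):ℝ) * f τ)) ≤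
      ENNReal.ofReal (2*t) * ENNReal.ofReal (ε/4) := by
    have hsplitm : ∫⁻ τ in Set.Ioc A t, ENNReal.ofReal (2 * (t - τ) ^ ((1/2):ℝ) * f τ)
        = ∫⁻ τ in Set.Ioc A t, ((fun τ => ENNReal.ofReal (2 * (t - τ) ^ ((1/2):ℝ))) *
            (fun τ => ENNReal.ofReal (f τ))) τ := by
      apply lintegral_congr_ae
      filter_upwards [ae_restrict_mem measurableSet_Ioc] with τ hτ
      rw [Pi.mul_apply, ← ENNReal.ofReal_mul
        (mul_nonneg (by norm_num) (Real.rpow_nonneg (by linarith [hτ.2]) _))]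
    rw [hsplitm]
    have hconj : Real.HolderConjugate 2 2 := Real.HolderConjugate.two_two
    refine le_trans (ENNReal.lintegral_mul_le_Lp_mul_Lq _ hconj ?_ ?_) ?_
    · exact (Measurable.ennreal_ofReal (by
        exact (measurable_const.sub measurable_id').pow_const _ |>.const_mul 2)).aemeasurable
    · exact hmeas.ennreal_ofReal.aemeasurable
    apply mul_le_mul'
    · -- first factor ≤ ofReal (2*t)
      have hpt : (∫⁻ τ in Set.Ioc A t, ENNReal.ofReal (2 * (t - τ) ^ ((1/2):ℝ)) ^ (2:ℝ))
          ≤ ∫⁻ _ in Set.Ioc A t, ENNReal.ofReal (4 * t) := by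
        apply lintegral_mono_ae
        filter_upwards [ae_restrict_mem measurableSet_Ioc] with τ hτ
        have h2 : (0:ℝ) ≤ (t - τ) ^ ((1/2):ℝ) := Real.rpow_nonneg (by linarith [hτ.2]) _
        rw [ENNReal.ofReal_rpow_of_nonneg (by positivity) (by norm_num)]
        apply ENNReal.ofReal_le_ofReal
        rw [Real.rpow_two]
        have h3 : ((t - τ) ^ ((1/2):ℝ)) ^ 2 = t - τ := by
          rw [← Real.rpow_two, ← Real.rpow_mul (by linarith [hτ.2])]
          norm_num
        have h4 : 0 < τ := lt_of_le_of_lt hA0 hτ.1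
        nlinarith
      have hvol : (∫⁻ _ in Set.Ioc A t, ENNReal.ofReal (4 * t)) ≤
          ENNReal.ofReal (4 * t) * ENNReal.ofReal t := by
        rw [setLIntegral_const, Real.volume_Ioc]
        exact mul_le_mul' le_rfl (ENNReal.ofReal_le_ofReal (by linarith))
      calc (∫⁻ τ in Set.Ioc A t, ENNReal.ofReal (2 * (t - τ) ^ ((1/2):ℝ)) ^ (2:ℝ)) ^ ((1:ℝ)/2)
          ≤ (ENNReal.ofReal (4 * t) * ENNReal.ofReal t) ^ ((1:ℝ)/2) :=
            ENNReal.rpow_le_rpow (le_trans hpt hvol) (by norm_num)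
        _ = ENNReal.ofReal (2 * t) := by
            rw [← ENNReal.ofReal_mul (by positivity),
              ENNReal.ofReal_rpow_of_nonneg (by positivity) (by norm_num)]
            congr 1
            have h5 : (4 * t * t : ℝ) = (2*t)^2 := by ring
            rw [h5, ← Real.rpow_two, ← Real.rpow_mul (by positivity)]
            norm_num
    · -- second factor ≤ ofReal (ε/4)
      have hpt : (∫⁻ τ in Set.Ioc A t, ENNReal.ofReal (f τ) ^ (2:ℝ))
          ≤ ENNReal.ofReal ((ε/4)^2) := by
        have heq : ∫⁻ τ in Set.Ioc A t, ENNReal.ofReal (f τ) ^ (2:ℝ)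
            = ∫⁻ τ in Set.Ioc A t, ENNReal.ofReal (f τ ^ 2) := by
          apply lintegral_congr_ae
          filter_upwards [ae_restrict_mem measurableSet_Ioc] with τ hτ
          rw [ENNReal.ofReal_rpow_of_nonneg (hpos τ (lt_of_le_of_lt hA0 hτ.1))
            (by norm_num), Real.rpow_two]
        rw [heq]
        exact le_trans (lintegral_mono_set Set.Ioc_subset_Ioi_self) hAδ
      calc (∫⁻ τ in Set.Ioc A t, ENNReal.ofReal (f τ) ^ (2:ℝ)) ^ ((1:ℝ)/2)
          ≤ (ENNReal.ofReal ((ε/4)^2)) ^ ((1:ℝ)/2) :=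
            ENNReal.rpow_le_rpow hpt (by norm_num)
        _ = ENNReal.ofReal (ε/4) := by
            rw [ENNReal.ofReal_rpow_of_nonneg (by positivity) (by norm_num),
              ← Real.rpow_two, ← Real.rpow_mul (by positivity)]
            norm_num
  -- combine
  have hR : L ≤ ENNReal.ofReal (2 * t ^ ((1/2):ℝ)) * C +
      ENNReal.ofReal (2*t) * ENNReal.ofReal (ε/4) := by
    rw [hsplit]; exact add_le_add hL1 hL2'
  have hRne : ENNReal.ofReal (2 * t ^ ((1/2):ℝ)) * C +
      ENNReal.ofReal (2*t) * ENNReal.ofReal (ε/4) ≠ ∞ := by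
    apply ENNReal.add_ne_top.2
    constructor
    · exact ENNReal.mul_ne_top ENNReal.ofReal_ne_top hCne
    · exact ENNReal.mul_ne_top ENNReal.ofReal_ne_top ENNReal.ofReal_ne_top
  have hLR : L.toReal ≤ 2 * Real.sqrt t * c + 2 * t * (ε/4) := by
    refine le_trans (ENNReal.toReal_mono hRne hR) ?_
    rw [ENNReal.toReal_add (ENNReal.mul_ne_top ENNReal.ofReal_ne_top hCne)
      (ENNReal.mul_ne_top ENNReal.ofReal_ne_top ENNReal.ofReal_ne_top),
      ENNReal.toReal_mul, ENNReal.toReal_mul, ENNReal.toReal_ofReal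
        (by positivity : (0:ℝ) ≤ 2 * t ^ ((1/2):ℝ)),
      ENNReal.toReal_ofReal (by positivity : (0:ℝ) ≤ 2*t),
      ENNReal.toReal_ofReal (by positivity : (0:ℝ) ≤ ε/4),
      Real.sqrt_eq_rpow, ← hcdef]
  rw [Real.norm_eq_abs, abs_of_nonneg (mul_nonneg (by positivity) ENNReal.toReal_nonneg)]
  have hsq : Real.sqrt t ^ 2 = t := Real.sq_sqrt htpos.le
  have hsp : 0 < Real.sqrt t := Real.sqrt_pos.2 htpos
  have hsgt : 4*c/ε < Real.sqrt t := Real.lt_sqrt_of_sq_lt ht2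
  have h1t : (0:ℝ) < 1/t := by positivity
  calc 1/t * L.toReal ≤ 1/t * (2 * Real.sqrt t * c + 2 * t * (ε/4)) := by
        exact mul_le_mul_of_nonneg_left hLR h1t.le
    _ < ε := by
        rw [div_mul_eq_mul_div, one_mul, div_lt_iff₀ htpos]
        have h4c : 4*c < ε * Real.sqrt t := by
          have := (div_lt_iff₀ hε).1 hsgt
          linarith
        nlinarith [mul_lt_mul_of_pos_left h4c hsp]
end

section
/- For α > 0, let ψ_α(r,θ) = r^{cos α} cos(θ - sin α · log r), u_α = ∇^⊥ψ_α, and let ū(x) = x^⊥/|x|² (i.e., e_θ/r). Then (u_α·∇u_α)·ū = (sin 2α / 2) r^{-4+2cos α} pointwise, and consequently ∫_{ℝ²\B(0,1)} (u_α·∇u_α)·ū = π sin 2α / (2 - 2cos α). -/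
open MeasureTheory Filter Set Complex

noncomputable section

abbrev E2 : Type := EuclideanSpace ℝ (Fin 2)

def polarArg (x : E2) : ℝ := Complex.arg ((x 0 : ℂ) + (x 1 : ℂ) * Complex.I)

def psiA (α : ℝ) (x : E2) : ℝ :=
  ‖x‖ ^ Real.cos α * Real.cos (polarArg x - Real.sin α * Real.log ‖x‖)

def uA (α : ℝ) (x : E2) : E2 :=
  (WithLp.equiv 2 (Fin 2 → ℝ)).symm
    ![-(fderiv ℝ (psiA α) x (EuclideanSpace.single 1 1)),
      fderiv ℝ (psiA α) x (EuclideanSpace.single 0 1)]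

def perp (x : E2) : E2 := (WithLp.equiv 2 (Fin 2 → ℝ)).symm ![-(x 1), x 0]

def rotFlow (x : E2) : E2 := (‖x‖ ^ 2)⁻¹ • perp x

/-- identification ℂ ≃ E2 -/
def iso : ℂ ≃ₗᵢ[ℝ] E2 := Complex.orthonormalBasisOneI.repr

lemma iso_apply_zero (z : ℂ) : iso z 0 = z.re := by
  simp [iso, Complex.orthonormalBasisOneI_repr_apply]
lemma iso_apply_one (z : ℂ) : iso z 1 = z.im := by
  simp [iso, Complex.orthonormalBasisOneI_repr_apply]
lemma iso_symm_apply (x : E2) : iso.symm x = (x 0 : ℂ) + (x 1 : ℂ) * Complex.I := by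
  simp [iso, Complex.orthonormalBasisOneI_repr_symm_apply]

lemma norm_iso (z : ℂ) : ‖iso z‖ = ‖z‖ := by
  rw [iso.norm_map]

lemma polarArg_iso (z : ℂ) : polarArg (iso z) = Complex.arg z := by
  unfold polarArg; rw [iso_apply_zero, iso_apply_one, Complex.re_add_im]

def cc (α : ℝ) : ℂ := ((Real.cos α : ℂ) - 1 - (Real.sin α : ℂ) * Complex.I) / 2

lemma cc_re (α : ℝ) : (cc α).re = (Real.cos α - 1) / 2 := by simp [cc, Complex.cos_ofReal_re]
lemma cc_im (α : ℝ) : (cc α).im = -Real.sin α / 2 := by simp [cc, Complex.sin_ofReal_re]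

def GG (α : ℝ) (z : ℂ) : ℂ := Complex.exp (cc α * (Real.log (Complex.normSq z) : ℂ))

def PsiC (α : ℝ) (z : ℂ) : ℝ := (z * GG α z).re

lemma psiA_eq (α : ℝ) {z : ℂ} (hz : z ≠ 0) : psiA α (iso z) = PsiC α z := by
  have hr : 0 < ‖z‖ := norm_pos_iff.mpr hz
  set s := Real.cos α
  set t := Real.sin α
  set r := ‖z‖ with hrdef
  have hL : Real.log (Complex.normSq z) = 2 * Real.log r := by
    rw [← Complex.sq_norm, ← hrdef, sq, Real.log_mul hr.ne' hr.ne']; ring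
  have hwre : (cc α * (Real.log (Complex.normSq z) : ℂ)).re = (s - 1) * Real.log r := by
    simp [Complex.mul_re, cc_re, cc_im, hL]; ring
  have hwim : (cc α * (Real.log (Complex.normSq z) : ℂ)).im = -(t * Real.log r) := by
    simp [Complex.mul_im, cc_re, cc_im, hL]; ring
  have hexp : Real.exp ((s - 1) * Real.log r) = r ^ (s - 1) := by
    rw [Real.rpow_def_of_pos hr]; ring_nf
  have hzre : z.re = r * Real.cos (Complex.arg z) := by
    rw [Complex.cos_arg hz, ← hrdef]; field_simp
  have hzim : z.im = r * Real.sin (Complex.arg z) := by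
    rw [Complex.sin_arg, ← hrdef]; field_simp
  have hrs : r ^ s = r ^ (s - 1) * r := by
    rw [← Real.rpow_add_one hr.ne' (s-1)]; ring_nf
  unfold psiA PsiC GG
  rw [norm_iso, polarArg_iso, ← hrdef, Complex.mul_re, Complex.exp_re, Complex.exp_im,
    hwre, hwim, hexp, hzre, hzim, Real.cos_sub, hrs]
  rw [Real.cos_neg, Real.sin_neg]
  ring

def RL (a : ℂ) : ℂ →L[ℝ] ℝ := Complex.reCLM.comp (a • ContinuousLinearMap.id ℝ ℂ)
lemma RL_apply (a v : ℂ) : RL a v = (a * v).re := by simp [RL]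

def aPsi (α : ℝ) (z : ℂ) : ℂ :=
  (1 + cc α) * GG α z + (starRingEnd ℂ) (cc α * z ^ 2 * GG α z) / (Complex.normSq z : ℂ)

lemma hasFDerivAt_normSq (z : ℂ) :
    HasFDerivAt (fun w : ℂ => Complex.normSq w)
      ((z.re • Complex.reCLM + z.re • Complex.reCLM) +
       (z.im • Complex.imCLM + z.im • Complex.imCLM)) z := by
  have hre : HasFDerivAt (fun w : ℂ => w.re) Complex.reCLM z := Complex.reCLM.hasFDerivAt
  have him : HasFDerivAt (fun w : ℂ => w.im) Complex.imCLM z := Complex.imCLM.hasFDerivAt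
  have h := (hre.mul hre).add (him.mul him)
  refine h.congr_of_eventuallyEq (Filter.Eventually.of_forall fun w => ?_)
  simp [Complex.normSq_apply]

lemma hasFDerivAt_logNormSq {z : ℂ} (hz : z ≠ 0) :
    HasFDerivAt (fun w : ℂ => Real.log (Complex.normSq w))
      ((Complex.normSq z)⁻¹ • ((z.re • Complex.reCLM + z.re • Complex.reCLM) +
       (z.im • Complex.imCLM + z.im • Complex.imCLM))) z :=
  (hasFDerivAt_normSq z).log (by simpa using hz)

lemma hasFDerivAt_GG (α : ℝ) {z : ℂ} (hz : z ≠ 0) :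
    HasFDerivAt (GG α)
      (GG α z • (cc α • (Complex.ofRealCLM.comp
        ((Complex.normSq z)⁻¹ • ((z.re • Complex.reCLM + z.re • Complex.reCLM) +
         (z.im • Complex.imCLM + z.im • Complex.imCLM)))))) z := by
  have h1 := Complex.ofRealCLM.hasFDerivAt.comp z (hasFDerivAt_logNormSq hz)
  have h2 := h1.const_mul (cc α)
  exact h2.cexp

lemma hasFDerivAt_PsiC (α : ℝ) {z : ℂ} (hz : z ≠ 0) :
    HasFDerivAt (PsiC α) (RL (aPsi α z)) z := by
  have hN : (Complex.normSq z) ≠ 0 := by simpa using hz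
  have hid : HasFDerivAt (fun w : ℂ => w) (ContinuousLinearMap.id ℝ ℂ) z := hasFDerivAt_id z
  have hzg := hid.mul (hasFDerivAt_GG α hz)
  have hPsi := Complex.reCLM.hasFDerivAt.comp z hzg
  refine HasFDerivAt.congr_fderiv hPsi (Eq.symm ?_)
  apply ContinuousLinearMap.ext; intro v
  have hNv : Complex.normSq z = z.re ^ 2 + z.im ^ 2 := by
    rw [Complex.normSq_apply]; ring
  simp only [RL_apply, ContinuousLinearMap.comp_apply, ContinuousLinearMap.add_apply,
    ContinuousLinearMap.smul_apply, ContinuousLinearMap.id_apply, Complex.reCLM_apply,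
    Complex.imCLM_apply, Complex.ofRealCLM_apply, smul_eq_mul, Complex.smul_re,
    Complex.real_smul]
  simp only [aPsi, map_mul, map_pow, Complex.add_re, Complex.mul_re, Complex.mul_im,
    Complex.one_re, Complex.one_im, Complex.add_im, Complex.conj_re, Complex.conj_im,
    Complex.div_ofReal_re, Complex.div_ofReal_im, Complex.ofReal_re, Complex.ofReal_im, pow_two]
  rw [hNv]
  have hden : z.re ^ 2 + z.im ^ 2 ≠ 0 := by rw [← hNv]; simpa using hz
  field_simp
  ring

def conjCLM : ℂ →L[ℝ] ℂ := Complex.conjLIE.toLinearIsometry.toContinuousLinearMap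
lemma conjCLM_apply (v : ℂ) : conjCLM v = (starRingEnd ℂ) v := rfl

def WL (a b : ℂ) : ℂ →L[ℝ] ℂ := a • ContinuousLinearMap.id ℝ ℂ + b • conjCLM
lemma WL_apply (a b v : ℂ) : WL a b v = a * v + b * (starRingEnd ℂ) v := by
  simp [WL, conjCLM_apply, smul_eq_mul]

def UU (α : ℝ) (z : ℂ) : ℂ :=
  (Complex.I * (1 + (starRingEnd ℂ) (cc α))) * (starRingEnd ℂ) (GG α z) +
  (Complex.I * cc α) * (z * z * GG α z * (((Complex.normSq z)⁻¹ : ℝ) : ℂ))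

def AA (α : ℝ) (z : ℂ) : ℂ :=
  Complex.I * (1 + (starRingEnd ℂ) (cc α)) * (starRingEnd ℂ) (cc α) * (starRingEnd ℂ) (GG α z) *
      (((Complex.normSq z)⁻¹ : ℝ) : ℂ) * (starRingEnd ℂ) z +
  Complex.I * cc α * ((cc α - 1) * (z * z) * GG α z * (((Complex.normSq z)⁻¹ : ℝ) : ℂ) *
      (((Complex.normSq z)⁻¹ : ℝ) : ℂ) * (starRingEnd ℂ) z +
    2 * z * GG α z * (((Complex.normSq z)⁻¹ : ℝ) : ℂ))

def BB (α : ℝ) (z : ℂ) : ℂ :=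
  Complex.I * (1 + (starRingEnd ℂ) (cc α)) * (starRingEnd ℂ) (cc α) * (starRingEnd ℂ) (GG α z) *
      (((Complex.normSq z)⁻¹ : ℝ) : ℂ) * z +
  Complex.I * cc α * (cc α - 1) * (z * z) * GG α z * (((Complex.normSq z)⁻¹ : ℝ) : ℂ) *
      (((Complex.normSq z)⁻¹ : ℝ) : ℂ) * z

lemma keyD (z v : ℂ) :
    ((z.re * v.re + z.re * v.re + (z.im * v.im + z.im * v.im) : ℝ) : ℂ) =
      (starRingEnd ℂ) z * v + z * (starRingEnd ℂ) v := by
  apply Complex.ext <;> simp <;> ring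

set_option maxHeartbeats 1000000 in
lemma hasFDerivAt_UU (α : ℝ) {z : ℂ} (hz : z ≠ 0) :
    HasFDerivAt (UU α) (WL (AA α z) (BB α z)) z := by
  have hN : (Complex.normSq z) ≠ 0 := by simpa using hz
  have hG := hasFDerivAt_GG α hz
  have hid : HasFDerivAt (fun w : ℂ => w) (ContinuousLinearMap.id ℝ ℂ) z := hasFDerivAt_id z
  have hconjG := Complex.conjLIE.hasFDerivAt.comp z hG
  have hT1 := hconjG.const_mul (Complex.I * (1 + (starRingEnd ℂ) (cc α)))
  have hNinv : HasFDerivAt (fun w : ℂ => (Complex.normSq w)⁻¹)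
      ((-(ContinuousLinearMap.mulLeftRight ℝ ℝ (Complex.normSq z)⁻¹ (Complex.normSq z)⁻¹)).comp
        ((z.re • Complex.reCLM + z.re • Complex.reCLM) +
         (z.im • Complex.imCLM + z.im • Complex.imCLM))) z :=
    (hasFDerivAt_inv' hN).comp z (hasFDerivAt_normSq z)
  have hNinvC := Complex.ofRealCLM.hasFDerivAt.comp z hNinv
  have hT2 := ((((hid.mul hid).mul hG).mul hNinvC).const_mul (Complex.I * cc α))
  have h := hT1.add hT2
  refine HasFDerivAt.congr_fderiv h (Eq.symm ?_)
  apply ContinuousLinearMap.ext; intro v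
  simp only [WL_apply, AA, BB, ContinuousLinearMap.comp_apply, ContinuousLinearMap.add_apply,
    ContinuousLinearMap.smul_apply, ContinuousLinearMap.id_apply, ContinuousLinearMap.neg_apply,
    ContinuousLinearMap.mulLeftRight_apply, Complex.reCLM_apply, Complex.imCLM_apply,
    Complex.ofRealCLM_apply, LinearIsometryEquiv.coe_coe'', ContinuousLinearMap.coe_coe,
    Complex.conjLIE_apply, smul_eq_mul, Complex.real_smul, Function.comp_apply]
  rw [show (((Complex.normSq z)⁻¹ * (z.re * v.re + z.re * v.re + (z.im * v.im + z.im * v.im)) : ℝ) : ℂ)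
      = (((Complex.normSq z)⁻¹ : ℝ) : ℂ) * ((starRingEnd ℂ) z * v + z * (starRingEnd ℂ) v) by
    rw [Complex.ofReal_mul, keyD],
    show ((-((Complex.normSq z)⁻¹ * (z.re * v.re + z.re * v.re + (z.im * v.im + z.im * v.im)) *
        (Complex.normSq z)⁻¹) : ℝ) : ℂ)
      = -((((Complex.normSq z)⁻¹ : ℝ) : ℂ) * ((starRingEnd ℂ) z * v + z * (starRingEnd ℂ) v) *
          (((Complex.normSq z)⁻¹ : ℝ) : ℂ)) by
    rw [Complex.ofReal_neg, Complex.ofReal_mul, Complex.ofReal_mul, keyD]]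
  simp only [map_mul, map_add, map_one, Complex.conj_conj, Complex.conj_I, Complex.conj_ofReal,
    Pi.mul_apply, Pi.pow_apply]
  ring

lemma UU_eq_conj (α : ℝ) (z : ℂ) : UU α z = Complex.I * (starRingEnd ℂ) (aPsi α z) := by
  simp only [UU, aPsi, map_add, map_mul, map_div₀, map_one, map_pow, Complex.conj_conj,
    Complex.conj_ofReal, Complex.ofReal_inv]
  ring

lemma iso_ne_zero {z : ℂ} (hz : z ≠ 0) : iso z ≠ 0 := by
  intro h; exact hz (by simpa using congrArg iso.symm h)

lemma isoSymm_ne_zero {x : E2} (hx : x ≠ 0) : iso.symm x ≠ 0 := by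
  intro h; exact hx (by simpa using congrArg iso h)

lemma uA_eq (α : ℝ) {z : ℂ} (hz : z ≠ 0) : uA α (iso z) = iso (UU α z) := by
  have hx : iso z ≠ 0 := iso_ne_zero hz
  have hz2 : HasFDerivAt (PsiC α) (RL (aPsi α z)) (iso.symm (iso z)) := by
    rw [LinearIsometryEquiv.symm_apply_apply]; exact hasFDerivAt_PsiC α hz
  have hiso : HasFDerivAt (fun y : E2 => iso.symm y)
      (iso.symm.toContinuousLinearEquiv : E2 →L[ℝ] ℂ) (iso z) :=
    iso.symm.toContinuousLinearEquiv.hasFDerivAt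
  have h0 := hz2.comp (iso z) hiso
  have heq : psiA α =ᶠ[nhds (iso z)] ((PsiC α) ∘ fun y : E2 => iso.symm y) := by
    filter_upwards [IsOpen.mem_nhds isOpen_ne hx] with y hy
    have h1 : iso (iso.symm y) = y := iso.apply_symm_apply y
    show psiA α y = PsiC α (iso.symm y)
    rw [← h1, psiA_eq α (isoSymm_ne_zero hy), LinearIsometryEquiv.symm_apply_apply]
  have hA := h0.congr_of_eventuallyEq heq
  have hfd := hA.fderiv
  have e1 : iso.symm (EuclideanSpace.single (0:Fin 2) (1:ℝ)) = 1 := by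
    rw [iso_symm_apply]; simp [EuclideanSpace.single_apply]
  have e2 : iso.symm (EuclideanSpace.single (1:Fin 2) (1:ℝ)) = Complex.I := by
    rw [iso_symm_apply]; simp [EuclideanSpace.single_apply]
  unfold uA
  rw [hfd]
  ext i
  fin_cases i
  · simp only [WithLp.equiv_symm_apply, PiLp.toLp_apply, Matrix.cons_val_zero,
      ContinuousLinearMap.comp_apply, ContinuousLinearEquiv.coe_coe,
      LinearIsometryEquiv.coe_toContinuousLinearEquiv]
    show _ = iso (UU α z) 0
    rw [e2, iso_apply_zero, UU_eq_conj, RL_apply]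
    simp [RL_apply, Complex.mul_re, Complex.mul_im]
  · simp only [WithLp.equiv_symm_apply, PiLp.toLp_apply, Matrix.cons_val_one, Matrix.head_cons,
      ContinuousLinearMap.comp_apply, ContinuousLinearEquiv.coe_coe,
      LinearIsometryEquiv.coe_toContinuousLinearEquiv]
    show _ = iso (UU α z) 1
    rw [e1, iso_apply_one, UU_eq_conj, RL_apply]
    simp [RL_apply, Complex.mul_re, Complex.mul_im]

def MMval (α : ℝ) (z : ℂ) : ℝ := Real.exp ((Real.cos α - 1) * Real.log (Complex.normSq z))

def E1val (α : ℝ) (z : ℂ) : ℂ :=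
  -(cc α * (1 + cc α) * (z * z) * (GG α z * GG α z) * (((Complex.normSq z)⁻¹ : ℝ) : ℂ))

lemma hggb (α : ℝ) (z : ℂ) :
    GG α z * (starRingEnd ℂ) (GG α z) = (MMval α z : ℂ) := by
  have key : (cc α * (Real.log (Complex.normSq z) : ℂ)) +
      (starRingEnd ℂ) (cc α * (Real.log (Complex.normSq z) : ℂ)) =
      (((Real.cos α - 1) * Real.log (Complex.normSq z) : ℝ) : ℂ) := by
    rw [Complex.add_conj]
    apply Complex.ofReal_inj.mpr
    simp [Complex.mul_re, cc_re]
    ring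
  rw [GG, ← Complex.exp_conj, ← Complex.exp_add, key, MMval, Complex.ofReal_exp]

set_option maxHeartbeats 4000000 in
lemma keyW (α : ℝ) {z : ℂ} (hz : z ≠ 0) :
    (starRingEnd ℂ) z * (AA α z * UU α z + BB α z * (starRingEnd ℂ) (UU α z)) =
      (E1val α z + (starRingEnd ℂ) (E1val α z))
        + (((Real.cos α - 1) * MMval α z : ℝ) : ℂ)
        + ((Real.sin α * Real.cos α * MMval α z : ℝ) : ℂ) * Complex.I := by
  have hN : Complex.normSq z ≠ 0 := by simpa using hz
  have hI : Complex.I * Complex.I = -1 := Complex.I_mul_I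
  have hzzb : z * (starRingEnd ℂ) z = ((Complex.normSq z : ℝ) : ℂ) := Complex.mul_conj z
  have hNnI : ((Complex.normSq z : ℝ) : ℂ) * (((Complex.normSq z)⁻¹ : ℝ) : ℂ) = 1 := by
    rw [← Complex.ofReal_mul, mul_inv_cancel₀ hN, Complex.ofReal_one]
  have hggb' := hggb α z
  have hpy : (Real.cos α : ℂ) * (Real.cos α : ℂ) + (Real.sin α : ℂ) * (Real.sin α : ℂ) = 1 := by
    norm_cast
    linear_combination Real.sin_sq_add_cos_sq α
  simp only [AA, BB, UU, E1val, cc, map_add, map_mul, map_div₀, map_sub, map_one, map_neg,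
    map_ofNat, Complex.conj_conj, Complex.conj_ofReal, Complex.conj_I,
    Complex.ofReal_mul, Complex.ofReal_sub, Complex.ofReal_one]
  linear_combination
    ((5/8)*((MMval α z : ℂ)) + (-1/8)*((Real.sin α : ℂ))*((MMval α z : ℂ))*(Complex.I) + (-1/8)*((Real.cos α : ℂ))*((MMval α z : ℂ)) + (-5/8)*((Real.cos α : ℂ))^2*((MMval α z : ℂ)) + (1/8)*((Real.cos α : ℂ))^2*((Real.sin α : ℂ))*((MMval α z : ℂ))*(Complex.I) + (1/8)*((Real.cos α : ℂ))^3*((MMval α z : ℂ)) + (-3/8)*((starRingEnd ℂ) z)^2*((starRingEnd ℂ) (GG α z))^2*((((Complex.normSq z)⁻¹ : ℝ) : ℂ)) + (-1/8)*((starRingEnd ℂ) z)^2*((starRingEnd ℂ) (GG α z))^2*((((Complex.normSq z)⁻¹ : ℝ) : ℂ))*((Real.sin α : ℂ))*(Complex.I) + (1/4)*((starRingEnd ℂ) z)^2*((starRingEnd ℂ) (GG α z))^2*((((Complex.normSq z)⁻¹ : ℝ) : ℂ))*((Real.sin α : ℂ))^2 + (1/8)*((starRingEnd ℂ) z)^2*((starRingEnd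 ℂ) (GG α z))^2*((((Complex.normSq z)⁻¹ : ℝ) : ℂ))*((Real.sin α : ℂ))^2*(Complex.I)^2 + (1/8)*((starRingEnd ℂ) z)^2*((starRingEnd ℂ) (GG α z))^2*((((Complex.normSq z)⁻¹ : ℝ) : ℂ))*((Real.sin α : ℂ))^3*(Complex.I)^3 + (-1/8)*((starRingEnd ℂ) z)^2*((starRingEnd ℂ) (GG α z))^2*((((Complex.normSq z)⁻¹ : ℝ) : ℂ))*((Real.cos α : ℂ)) + (1/4)*((starRingEnd ℂ) z)^2*((starRingEnd ℂ) (GG α z))^2*((((Complex.normSq z)⁻¹ : ℝ) : ℂ))*((Real.cos α : ℂ))*((Real.sin α : ℂ))*(Complex.I) + (3/8)*((starRingEnd ℂ) z)^2*((starRingEnd ℂ) (GG α z))^2*((((Complex.normSq z)⁻¹ : ℝ) : ℂ))*((Real.cos α : ℂ))*((Real.sin α : ℂ))^2*(Complex.I)^2 + (3/8)*((starRingEnd ℂ) z)^2*((starRingEnd ℂ) (GG α z))^2*((((Complex.normSq z)⁻¹ : ℝ) : ℂ))*((Real.cos α : ℂ))^2 + (3/8)*((starRingEnd ℂ) z)^2*((starRingEnd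 ℂ) (GG α z))^2*((((Complex.normSq z)⁻¹ : ℝ) : ℂ))*((Real.cos α : ℂ))^2*((Real.sin α : ℂ))*(Complex.I) + (1/8)*((starRingEnd ℂ) z)^2*((starRingEnd ℂ) (GG α z))^2*((((Complex.normSq z)⁻¹ : ℝ) : ℂ))*((Real.cos α : ℂ))^3 + (-1/2)*(z)*((starRingEnd ℂ) z)*((((Complex.normSq z)⁻¹ : ℝ) : ℂ))*((MMval α z : ℂ)) + (1/4)*(z)*((starRingEnd ℂ) z)*((((Complex.normSq z)⁻¹ : ℝ) : ℂ))*((Real.cos α : ℂ))*((MMval α z : ℂ)) + (1/2)*(z)*((starRingEnd ℂ) z)*((((Complex.normSq z)⁻¹ : ℝ) : ℂ))*((Real.cos α : ℂ))^2*((MMval α z : ℂ)) + (-1/4)*(z)*((starRingEnd ℂ) z)*((((Complex.normSq z)⁻¹ : ℝ) : ℂ))*((Real.cos α : ℂ))^3*((MMval α z : ℂ)) + (-3/8)*(z)*((starRingEnd ℂ) z)*(GG α z)*((starRingEnd ℂ) (GG α z))*((((Complex.normSq z)⁻¹ : ℝ) : ℂ)) + (-9/8)*(z)*((starRingEnd ℂ)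 z)*(GG α z)*((starRingEnd ℂ) (GG α z))*((((Complex.normSq z)⁻¹ : ℝ) : ℂ))*((Real.sin α : ℂ))*(Complex.I) + (-5/8)*(z)*((starRingEnd ℂ) z)*(GG α z)*((starRingEnd ℂ) (GG α z))*((((Complex.normSq z)⁻¹ : ℝ) : ℂ))*((Real.sin α : ℂ))^2*(Complex.I)^2 + (1/8)*(z)*((starRingEnd ℂ) z)*(GG α z)*((starRingEnd ℂ) (GG α z))*((((Complex.normSq z)⁻¹ : ℝ) : ℂ))*((Real.sin α : ℂ))^3*(Complex.I)^3 + (1/8)*(z)*((starRingEnd ℂ) z)*(GG α z)*((starRingEnd ℂ) (GG α z))*((((Complex.normSq z)⁻¹ : ℝ) : ℂ))*((Real.cos α : ℂ)) + (-1/4)*(z)*((starRingEnd ℂ) z)*(GG α z)*((starRingEnd ℂ) (GG α z))*((((Complex.normSq z)⁻¹ : ℝ) : ℂ))*((Real.cos α : ℂ))*((Real.sin α : ℂ))*(Complex.I) + (1/8)*(z)*((starRingEnd ℂ) z)*(GG α z)*((starRingEnd ℂ) (GG α z))*((((Complex.normSq z)⁻¹ : ℝ) : ℂ))*((Real.cos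 α : ℂ))*((Real.sin α : ℂ))^2*(Complex.I)^2 + (3/8)*(z)*((starRingEnd ℂ) z)*(GG α z)*((starRingEnd ℂ) (GG α z))*((((Complex.normSq z)⁻¹ : ℝ) : ℂ))*((Real.cos α : ℂ))^2 + (-1/8)*(z)*((starRingEnd ℂ) z)*(GG α z)*((starRingEnd ℂ) (GG α z))*((((Complex.normSq z)⁻¹ : ℝ) : ℂ))*((Real.cos α : ℂ))^2*((Real.sin α : ℂ))*(Complex.I) + (-1/8)*(z)*((starRingEnd ℂ) z)*(GG α z)*((starRingEnd ℂ) (GG α z))*((((Complex.normSq z)⁻¹ : ℝ) : ℂ))*((Real.cos α : ℂ))^3 + (-1/8)*(z)*((starRingEnd ℂ) z)^3*((starRingEnd ℂ) (GG α z))^2*((((Complex.normSq z)⁻¹ : ℝ) : ℂ))^2 + (1/8)*(z)*((starRingEnd ℂ) z)^3*((starRingEnd ℂ) (GG α z))^2*((((Complex.normSq z)⁻¹ : ℝ) : ℂ))^2*((Real.sin α : ℂ))*(Complex.I) + (1/8)*(z)*((starRingEnd ℂ) z)^3*((starRingEnd ℂ) (GG α z))^2*((((Complex.normSq z)⁻¹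 : ℝ) : ℂ))^2*((Real.sin α : ℂ))^2*(Complex.I)^2 + (-1/8)*(z)*((starRingEnd ℂ) z)^3*((starRingEnd ℂ) (GG α z))^2*((((Complex.normSq z)⁻¹ : ℝ) : ℂ))^2*((Real.sin α : ℂ))^3*(Complex.I)^3 + (1/8)*(z)*((starRingEnd ℂ) z)^3*((starRingEnd ℂ) (GG α z))^2*((((Complex.normSq z)⁻¹ : ℝ) : ℂ))^2*((Real.cos α : ℂ)) + (1/4)*(z)*((starRingEnd ℂ) z)^3*((starRingEnd ℂ) (GG α z))^2*((((Complex.normSq z)⁻¹ : ℝ) : ℂ))^2*((Real.cos α : ℂ))*((Real.sin α : ℂ))*(Complex.I) + (-3/8)*(z)*((starRingEnd ℂ) z)^3*((starRingEnd ℂ) (GG α z))^2*((((Complex.normSq z)⁻¹ : ℝ) : ℂ))^2*((Real.cos α : ℂ))*((Real.sin α : ℂ))^2*(Complex.I)^2 + (1/8)*(z)*((starRingEnd ℂ) z)^3*((starRingEnd ℂ) (GG α z))^2*((((Complex.normSq z)⁻¹ : ℝ) : ℂ))^2*((Real.cos α : ℂ))^2 + (-3/8)*(z)*((starRingEnd ℂ)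 z)^3*((starRingEnd ℂ) (GG α z))^2*((((Complex.normSq z)⁻¹ : ℝ) : ℂ))^2*((Real.cos α : ℂ))^2*((Real.sin α : ℂ))*(Complex.I) + (-1/8)*(z)*((starRingEnd ℂ) z)^3*((starRingEnd ℂ) (GG α z))^2*((((Complex.normSq z)⁻¹ : ℝ) : ℂ))^2*((Real.cos α : ℂ))^3 + (-7/8)*(z)^2*(GG α z)^2*((((Complex.normSq z)⁻¹ : ℝ) : ℂ)) + (-1/8)*(z)^2*(GG α z)^2*((((Complex.normSq z)⁻¹ : ℝ) : ℂ))*((Real.sin α : ℂ))*(Complex.I) + (1/4)*(z)^2*(GG α z)^2*((((Complex.normSq z)⁻¹ : ℝ) : ℂ))*((Real.sin α : ℂ))^2 + (3/8)*(z)^2*(GG α z)^2*((((Complex.normSq z)⁻¹ : ℝ) : ℂ))*((Real.cos α : ℂ)) + (7/8)*(z)^2*(GG α z)^2*((((Complex.normSq z)⁻¹ : ℝ) : ℂ))*((Real.cos α : ℂ))^2 + (1/8)*(z)^2*(GG α z)^2*((((Complex.normSq z)⁻¹ : ℝ) : ℂ))*((Real.cos α : ℂ))^2*((Real.sin α : ℂ))*(Complex.I)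 + (-3/8)*(z)^2*(GG α z)^2*((((Complex.normSq z)⁻¹ : ℝ) : ℂ))*((Real.cos α : ℂ))^3 + (3/8)*(z)^2*((starRingEnd ℂ) z)^2*((((Complex.normSq z)⁻¹ : ℝ) : ℂ))^2*((MMval α z : ℂ)) + (1/8)*(z)^2*((starRingEnd ℂ) z)^2*((((Complex.normSq z)⁻¹ : ℝ) : ℂ))^2*((Real.sin α : ℂ))*((MMval α z : ℂ))*(Complex.I) + (-1/8)*(z)^2*((starRingEnd ℂ) z)^2*((((Complex.normSq z)⁻¹ : ℝ) : ℂ))^2*((Real.cos α : ℂ))*((MMval α z : ℂ)) + (-3/8)*(z)^2*((starRingEnd ℂ) z)^2*((((Complex.normSq z)⁻¹ : ℝ) : ℂ))^2*((Real.cos α : ℂ))^2*((MMval α z : ℂ)) + (-1/8)*(z)^2*((starRingEnd ℂ) z)^2*((((Complex.normSq z)⁻¹ : ℝ) : ℂ))^2*((Real.cos α : ℂ))^2*((Real.sin α : ℂ))*((MMval α z : ℂ))*(Complex.I) + (1/8)*(z)^2*((starRingEnd ℂ) z)^2*((((Complex.normSq z)⁻¹ : ℝ) : ℂ))^2*((Real.cos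 α : ℂ))^3*((MMval α z : ℂ)) + (1/2)*(z)^2*((starRingEnd ℂ) z)^2*(GG α z)*((starRingEnd ℂ) (GG α z))*((((Complex.normSq z)⁻¹ : ℝ) : ℂ))^2 + (1)*(z)^2*((starRingEnd ℂ) z)^2*(GG α z)*((starRingEnd ℂ) (GG α z))*((((Complex.normSq z)⁻¹ : ℝ) : ℂ))^2*((Real.sin α : ℂ))*(Complex.I) + (1/2)*(z)^2*((starRingEnd ℂ) z)^2*(GG α z)*((starRingEnd ℂ) (GG α z))*((((Complex.normSq z)⁻¹ : ℝ) : ℂ))^2*((Real.sin α : ℂ))^2*(Complex.I)^2 + (-1/4)*(z)^2*((starRingEnd ℂ) z)^2*(GG α z)*((starRingEnd ℂ) (GG α z))*((((Complex.normSq z)⁻¹ : ℝ) : ℂ))^2*((Real.cos α : ℂ)) + (-1/2)*(z)^2*((starRingEnd ℂ) z)^2*(GG α z)*((starRingEnd ℂ) (GG α z))*((((Complex.normSq z)⁻¹ : ℝ) : ℂ))^2*((Real.cos α : ℂ))*((Real.sin α : ℂ))*(Complex.I) + (-1/4)*(z)^2*((starRingEnd ℂ) z)^2*(GG α z)*((starRingEnd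 ℂ) (GG α z))*((((Complex.normSq z)⁻¹ : ℝ) : ℂ))^2*((Real.cos α : ℂ))*((Real.sin α : ℂ))^2*(Complex.I)^2 + (-1/2)*(z)^2*((starRingEnd ℂ) z)^2*(GG α z)*((starRingEnd ℂ) (GG α z))*((((Complex.normSq z)⁻¹ : ℝ) : ℂ))^2*((Real.cos α : ℂ))^2 + (1/4)*(z)^2*((starRingEnd ℂ) z)^2*(GG α z)*((starRingEnd ℂ) (GG α z))*((((Complex.normSq z)⁻¹ : ℝ) : ℂ))^2*((Real.cos α : ℂ))^3 + (3/4)*(z)^3*((starRingEnd ℂ) z)*(GG α z)^2*((((Complex.normSq z)⁻¹ : ℝ) : ℂ))^2 + (1)*(z)^3*((starRingEnd ℂ) z)*(GG α z)^2*((((Complex.normSq z)⁻¹ : ℝ) : ℂ))^2*((Real.sin α : ℂ))*(Complex.I) + (7/8)*(z)^3*((starRingEnd ℂ) z)*(GG α z)^2*((((Complex.normSq z)⁻¹ : ℝ) : ℂ))^2*((Real.sin α : ℂ))^2*(Complex.I)^2 + (1/8)*(z)^3*((starRingEnd ℂ) z)*(GG α z)^2*((((Complex.normSq z)⁻¹ :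 ℝ) : ℂ))^2*((Real.sin α : ℂ))^3*(Complex.I)^3 + (-5/4)*(z)^3*((starRingEnd ℂ) z)*(GG α z)^2*((((Complex.normSq z)⁻¹ : ℝ) : ℂ))^2*((Real.cos α : ℂ)) + (-7/4)*(z)^3*((starRingEnd ℂ) z)*(GG α z)^2*((((Complex.normSq z)⁻¹ : ℝ) : ℂ))^2*((Real.cos α : ℂ))*((Real.sin α : ℂ))*(Complex.I) + (-3/8)*(z)^3*((starRingEnd ℂ) z)*(GG α z)^2*((((Complex.normSq z)⁻¹ : ℝ) : ℂ))^2*((Real.cos α : ℂ))*((Real.sin α : ℂ))^2*(Complex.I)^2 + (1/4)*(z)^3*((starRingEnd ℂ) z)*(GG α z)^2*((((Complex.normSq z)⁻¹ : ℝ) : ℂ))^2*((Real.cos α : ℂ))^2 + (1/4)*(z)^3*((starRingEnd ℂ) z)*(GG α z)^2*((((Complex.normSq z)⁻¹ : ℝ) : ℂ))^2*((Real.cos α : ℂ))^2*((Real.sin α : ℂ))*(Complex.I) + (1/4)*(z)^3*((starRingEnd ℂ) z)*(GG α z)^2*((((Complex.normSq z)⁻¹ : ℝ) : ℂ))^2*((Real.cos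 α : ℂ))^3 + (3/8)*(z)^3*((starRingEnd ℂ) z)^3*(GG α z)*((starRingEnd ℂ) (GG α z))*((((Complex.normSq z)⁻¹ : ℝ) : ℂ))^3 + (1/8)*(z)^3*((starRingEnd ℂ) z)^3*(GG α z)*((starRingEnd ℂ) (GG α z))*((((Complex.normSq z)⁻¹ : ℝ) : ℂ))^3*((Real.sin α : ℂ))*(Complex.I) + (-3/8)*(z)^3*((starRingEnd ℂ) z)^3*(GG α z)*((starRingEnd ℂ) (GG α z))*((((Complex.normSq z)⁻¹ : ℝ) : ℂ))^3*((Real.sin α : ℂ))^2*(Complex.I)^2 + (-1/8)*(z)^3*((starRingEnd ℂ) z)^3*(GG α z)*((starRingEnd ℂ) (GG α z))*((((Complex.normSq z)⁻¹ : ℝ) : ℂ))^3*((Real.sin α : ℂ))^3*(Complex.I)^3 + (-7/8)*(z)^3*((starRingEnd ℂ) z)^3*(GG α z)*((starRingEnd ℂ) (GG α z))*((((Complex.normSq z)⁻¹ : ℝ) : ℂ))^3*((Real.cos α : ℂ)) + (-1/4)*(z)^3*((starRingEnd ℂ) z)^3*(GG α z)*((starRingEnd ℂ) (GG α z))*((((Complex.normSq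 z)⁻¹ : ℝ) : ℂ))^3*((Real.cos α : ℂ))*((Real.sin α : ℂ))*(Complex.I) + (1/8)*(z)^3*((starRingEnd ℂ) z)^3*(GG α z)*((starRingEnd ℂ) (GG α z))*((((Complex.normSq z)⁻¹ : ℝ) : ℂ))^3*((Real.cos α : ℂ))*((Real.sin α : ℂ))^2*(Complex.I)^2 + (5/8)*(z)^3*((starRingEnd ℂ) z)^3*(GG α z)*((starRingEnd ℂ) (GG α z))*((((Complex.normSq z)⁻¹ : ℝ) : ℂ))^3*((Real.cos α : ℂ))^2 + (1/8)*(z)^3*((starRingEnd ℂ) z)^3*(GG α z)*((starRingEnd ℂ) (GG α z))*((((Complex.normSq z)⁻¹ : ℝ) : ℂ))^3*((Real.cos α : ℂ))^2*((Real.sin α : ℂ))*(Complex.I) + (-1/8)*(z)^3*((starRingEnd ℂ) z)^3*(GG α z)*((starRingEnd ℂ) (GG α z))*((((Complex.normSq z)⁻¹ : ℝ) : ℂ))^3*((Real.cos α : ℂ))^3 + (-3/8)*(z)^4*((starRingEnd ℂ) z)^2*(GG α z)^2*((((Complex.normSq z)⁻¹ : ℝ) : ℂ))^3 + (-7/8)*(z)^4*((starRingEnd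 ℂ) z)^2*(GG α z)^2*((((Complex.normSq z)⁻¹ : ℝ) : ℂ))^3*((Real.sin α : ℂ))*(Complex.I) + (-5/8)*(z)^4*((starRingEnd ℂ) z)^2*(GG α z)^2*((((Complex.normSq z)⁻¹ : ℝ) : ℂ))^3*((Real.sin α : ℂ))^2*(Complex.I)^2 + (-1/8)*(z)^4*((starRingEnd ℂ) z)^2*(GG α z)^2*((((Complex.normSq z)⁻¹ : ℝ) : ℂ))^3*((Real.sin α : ℂ))^3*(Complex.I)^3 + (7/8)*(z)^4*((starRingEnd ℂ) z)^2*(GG α z)^2*((((Complex.normSq z)⁻¹ : ℝ) : ℂ))^3*((Real.cos α : ℂ)) + (5/4)*(z)^4*((starRingEnd ℂ) z)^2*(GG α z)^2*((((Complex.normSq z)⁻¹ : ℝ) : ℂ))^3*((Real.cos α : ℂ))*((Real.sin α : ℂ))*(Complex.I) + (3/8)*(z)^4*((starRingEnd ℂ) z)^2*(GG α z)^2*((((Complex.normSq z)⁻¹ : ℝ) : ℂ))^3*((Real.cos α : ℂ))*((Real.sin α : ℂ))^2*(Complex.I)^2 + (-5/8)*(z)^4*((starRingEnd ℂ) z)^2*(GG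 α z)^2*((((Complex.normSq z)⁻¹ : ℝ) : ℂ))^3*((Real.cos α : ℂ))^2 + (-3/8)*(z)^4*((starRingEnd ℂ) z)^2*(GG α z)^2*((((Complex.normSq z)⁻¹ : ℝ) : ℂ))^3*((Real.cos α : ℂ))^2*((Real.sin α : ℂ))*(Complex.I) + (1/8)*(z)^4*((starRingEnd ℂ) z)^2*(GG α z)^2*((((Complex.normSq z)⁻¹ : ℝ) : ℂ))^3*((Real.cos α : ℂ))^3) * hI +
    ((-3/4)*((((Complex.normSq z)⁻¹ : ℝ) : ℂ))*((MMval α z : ℂ)) + (-5/4)*((((Complex.normSq z)⁻¹ : ℝ) : ℂ))*((Real.sin α : ℂ))*((MMval α z : ℂ))*(Complex.I) + (1)*((((Complex.normSq z)⁻¹ : ℝ) : ℂ))*((Real.cos α : ℂ))*((MMval α z : ℂ)) + (3/4)*((((Complex.normSq z)⁻¹ : ℝ) : ℂ))*((Real.cos α : ℂ))*((Real.sin α : ℂ))*((MMval α z : ℂ))*(Complex.I) + (-1/4)*((((Complex.normSq z)⁻¹ : ℝ) : ℂ))*((Real.cos α : ℂ))^2*((MMval α z : ℂ)) + (3/8)*(GG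 α z)*((starRingEnd ℂ) (GG α z))*((((Complex.normSq z)⁻¹ : ℝ) : ℂ)) + (9/8)*(GG α z)*((starRingEnd ℂ) (GG α z))*((((Complex.normSq z)⁻¹ : ℝ) : ℂ))*((Real.sin α : ℂ))*(Complex.I) + (5/8)*(GG α z)*((starRingEnd ℂ) (GG α z))*((((Complex.normSq z)⁻¹ : ℝ) : ℂ))*((Real.sin α : ℂ))^2*(Complex.I)^2 + (-1/8)*(GG α z)*((starRingEnd ℂ) (GG α z))*((((Complex.normSq z)⁻¹ : ℝ) : ℂ))*((Real.sin α : ℂ))^3*(Complex.I)^3 + (-1/8)*(GG α z)*((starRingEnd ℂ) (GG α z))*((((Complex.normSq z)⁻¹ : ℝ) : ℂ))*((Real.cos α : ℂ)) + (1/4)*(GG α z)*((starRingEnd ℂ) (GG α z))*((((Complex.normSq z)⁻¹ : ℝ) : ℂ))*((Real.cos α : ℂ))*((Real.sin α : ℂ))*(Complex.I) + (-1/8)*(GG α z)*((starRingEnd ℂ) (GG α z))*((((Complex.normSq z)⁻¹ : ℝ) : ℂ))*((Real.cos α : ℂ))*((Real.sin α : ℂ))^2*(Complex.I)^2 + (-3/8)*(GG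 α z)*((starRingEnd ℂ) (GG α z))*((((Complex.normSq z)⁻¹ : ℝ) : ℂ))*((Real.cos α : ℂ))^2 + (1/8)*(GG α z)*((starRingEnd ℂ) (GG α z))*((((Complex.normSq z)⁻¹ : ℝ) : ℂ))*((Real.cos α : ℂ))^2*((Real.sin α : ℂ))*(Complex.I) + (1/8)*(GG α z)*((starRingEnd ℂ) (GG α z))*((((Complex.normSq z)⁻¹ : ℝ) : ℂ))*((Real.cos α : ℂ))^3 + (1/8)*((starRingEnd ℂ) z)^2*((starRingEnd ℂ) (GG α z))^2*((((Complex.normSq z)⁻¹ : ℝ) : ℂ))^2 + (-1/8)*((starRingEnd ℂ) z)^2*((starRingEnd ℂ) (GG α z))^2*((((Complex.normSq z)⁻¹ : ℝ) : ℂ))^2*((Real.sin α : ℂ))*(Complex.I) + (-1/8)*((starRingEnd ℂ) z)^2*((starRingEnd ℂ) (GG α z))^2*((((Complex.normSq z)⁻¹ : ℝ) : ℂ))^2*((Real.sin α : ℂ))^2*(Complex.I)^2 + (1/8)*((starRingEnd ℂ) z)^2*((starRingEnd ℂ) (GG α z))^2*((((Complex.normSq z)⁻¹ : ℝ) : ℂ))^2*((Real.sin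 α : ℂ))^3*(Complex.I)^3 + (-1/8)*((starRingEnd ℂ) z)^2*((starRingEnd ℂ) (GG α z))^2*((((Complex.normSq z)⁻¹ : ℝ) : ℂ))^2*((Real.cos α : ℂ)) + (-1/4)*((starRingEnd ℂ) z)^2*((starRingEnd ℂ) (GG α z))^2*((((Complex.normSq z)⁻¹ : ℝ) : ℂ))^2*((Real.cos α : ℂ))*((Real.sin α : ℂ))*(Complex.I) + (3/8)*((starRingEnd ℂ) z)^2*((starRingEnd ℂ) (GG α z))^2*((((Complex.normSq z)⁻¹ : ℝ) : ℂ))^2*((Real.cos α : ℂ))*((Real.sin α : ℂ))^2*(Complex.I)^2 + (-1/8)*((starRingEnd ℂ) z)^2*((starRingEnd ℂ) (GG α z))^2*((((Complex.normSq z)⁻¹ : ℝ) : ℂ))^2*((Real.cos α : ℂ))^2 + (3/8)*((starRingEnd ℂ) z)^2*((starRingEnd ℂ) (GG α z))^2*((((Complex.normSq z)⁻¹ : ℝ) : ℂ))^2*((Real.cos α : ℂ))^2*((Real.sin α : ℂ))*(Complex.I) + (1/8)*((starRingEnd ℂ) z)^2*((starRingEnd ℂ) (GG α z))^2*((((Complex.normSq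 z)⁻¹ : ℝ) : ℂ))^2*((Real.cos α : ℂ))^3 + (-3/4)*(z)*((starRingEnd ℂ) z)*((((Complex.normSq z)⁻¹ : ℝ) : ℂ))^2*((MMval α z : ℂ)) + (-1/4)*(z)*((starRingEnd ℂ) z)*((((Complex.normSq z)⁻¹ : ℝ) : ℂ))^2*((Real.sin α : ℂ))*((MMval α z : ℂ))*(Complex.I) + (1)*(z)*((starRingEnd ℂ) z)*((((Complex.normSq z)⁻¹ : ℝ) : ℂ))^2*((Real.cos α : ℂ))*((MMval α z : ℂ)) + (1/4)*(z)*((starRingEnd ℂ) z)*((((Complex.normSq z)⁻¹ : ℝ) : ℂ))^2*((Real.cos α : ℂ))*((Real.sin α : ℂ))*((MMval α z : ℂ))*(Complex.I) + (-1/4)*(z)*((starRingEnd ℂ) z)*((((Complex.normSq z)⁻¹ : ℝ) : ℂ))^2*((Real.cos α : ℂ))^2*((MMval α z : ℂ)) + (-1/2)*(z)*((starRingEnd ℂ) z)*(GG α z)*((starRingEnd ℂ) (GG α z))*((((Complex.normSq z)⁻¹ : ℝ) : ℂ))^2 + (-1)*(z)*((starRingEnd ℂ) z)*(GG α z)*((starRingEnd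 ℂ) (GG α z))*((((Complex.normSq z)⁻¹ : ℝ) : ℂ))^2*((Real.sin α : ℂ))*(Complex.I) + (-1/2)*(z)*((starRingEnd ℂ) z)*(GG α z)*((starRingEnd ℂ) (GG α z))*((((Complex.normSq z)⁻¹ : ℝ) : ℂ))^2*((Real.sin α : ℂ))^2*(Complex.I)^2 + (1/4)*(z)*((starRingEnd ℂ) z)*(GG α z)*((starRingEnd ℂ) (GG α z))*((((Complex.normSq z)⁻¹ : ℝ) : ℂ))^2*((Real.cos α : ℂ)) + (1/2)*(z)*((starRingEnd ℂ) z)*(GG α z)*((starRingEnd ℂ) (GG α z))*((((Complex.normSq z)⁻¹ : ℝ) : ℂ))^2*((Real.cos α : ℂ))*((Real.sin α : ℂ))*(Complex.I) + (1/4)*(z)*((starRingEnd ℂ) z)*(GG α z)*((starRingEnd ℂ) (GG α z))*((((Complex.normSq z)⁻¹ : ℝ) : ℂ))^2*((Real.cos α : ℂ))*((Real.sin α : ℂ))^2*(Complex.I)^2 + (1/2)*(z)*((starRingEnd ℂ) z)*(GG α z)*((starRingEnd ℂ) (GG α z))*((((Complex.normSq z)⁻¹ : ℝ) : ℂ))^2*((Real.cos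 α : ℂ))^2 + (-1/4)*(z)*((starRingEnd ℂ) z)*(GG α z)*((starRingEnd ℂ) (GG α z))*((((Complex.normSq z)⁻¹ : ℝ) : ℂ))^2*((Real.cos α : ℂ))^3 + (-3/8)*(z)^2*(GG α z)^2*((((Complex.normSq z)⁻¹ : ℝ) : ℂ))^2 + (-1/8)*(z)^2*(GG α z)^2*((((Complex.normSq z)⁻¹ : ℝ) : ℂ))^2*((Real.sin α : ℂ))*(Complex.I) + (-7/8)*(z)^2*(GG α z)^2*((((Complex.normSq z)⁻¹ : ℝ) : ℂ))^2*((Real.sin α : ℂ))^2*(Complex.I)^2 + (-1/8)*(z)^2*(GG α z)^2*((((Complex.normSq z)⁻¹ : ℝ) : ℂ))^2*((Real.sin α : ℂ))^3*(Complex.I)^3 + (3/8)*(z)^2*(GG α z)^2*((((Complex.normSq z)⁻¹ : ℝ) : ℂ))^2*((Real.cos α : ℂ)) + (1/2)*(z)^2*(GG α z)^2*((((Complex.normSq z)⁻¹ : ℝ) : ℂ))^2*((Real.cos α : ℂ))*((Real.sin α : ℂ))*(Complex.I) + (3/8)*(z)^2*(GG α z)^2*((((Complex.normSq z)⁻¹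 : ℝ) : ℂ))^2*((Real.cos α : ℂ))*((Real.sin α : ℂ))^2*(Complex.I)^2 + (3/8)*(z)^2*(GG α z)^2*((((Complex.normSq z)⁻¹ : ℝ) : ℂ))^2*((Real.cos α : ℂ))^2 + (1/8)*(z)^2*(GG α z)^2*((((Complex.normSq z)⁻¹ : ℝ) : ℂ))^2*((Real.cos α : ℂ))^2*((Real.sin α : ℂ))*(Complex.I) + (-3/8)*(z)^2*(GG α z)^2*((((Complex.normSq z)⁻¹ : ℝ) : ℂ))^2*((Real.cos α : ℂ))^3 + (-3/8)*(z)^2*((starRingEnd ℂ) z)^2*(GG α z)*((starRingEnd ℂ) (GG α z))*((((Complex.normSq z)⁻¹ : ℝ) : ℂ))^3 + (-1/8)*(z)^2*((starRingEnd ℂ) z)^2*(GG α z)*((starRingEnd ℂ) (GG α z))*((((Complex.normSq z)⁻¹ : ℝ) : ℂ))^3*((Real.sin α : ℂ))*(Complex.I) + (3/8)*(z)^2*((starRingEnd ℂ) z)^2*(GG α z)*((starRingEnd ℂ) (GG α z))*((((Complex.normSq z)⁻¹ : ℝ) : ℂ))^3*((Real.sin α : ℂ))^2*(Complex.I)^2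 + (1/8)*(z)^2*((starRingEnd ℂ) z)^2*(GG α z)*((starRingEnd ℂ) (GG α z))*((((Complex.normSq z)⁻¹ : ℝ) : ℂ))^3*((Real.sin α : ℂ))^3*(Complex.I)^3 + (7/8)*(z)^2*((starRingEnd ℂ) z)^2*(GG α z)*((starRingEnd ℂ) (GG α z))*((((Complex.normSq z)⁻¹ : ℝ) : ℂ))^3*((Real.cos α : ℂ)) + (1/4)*(z)^2*((starRingEnd ℂ) z)^2*(GG α z)*((starRingEnd ℂ) (GG α z))*((((Complex.normSq z)⁻¹ : ℝ) : ℂ))^3*((Real.cos α : ℂ))*((Real.sin α : ℂ))*(Complex.I) + (-1/8)*(z)^2*((starRingEnd ℂ) z)^2*(GG α z)*((starRingEnd ℂ) (GG α z))*((((Complex.normSq z)⁻¹ : ℝ) : ℂ))^3*((Real.cos α : ℂ))*((Real.sin α : ℂ))^2*(Complex.I)^2 + (-5/8)*(z)^2*((starRingEnd ℂ) z)^2*(GG α z)*((starRingEnd ℂ) (GG α z))*((((Complex.normSq z)⁻¹ : ℝ) : ℂ))^3*((Real.cos α : ℂ))^2 + (-1/8)*(z)^2*((starRingEnd ℂ)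 z)^2*(GG α z)*((starRingEnd ℂ) (GG α z))*((((Complex.normSq z)⁻¹ : ℝ) : ℂ))^3*((Real.cos α : ℂ))^2*((Real.sin α : ℂ))*(Complex.I) + (1/8)*(z)^2*((starRingEnd ℂ) z)^2*(GG α z)*((starRingEnd ℂ) (GG α z))*((((Complex.normSq z)⁻¹ : ℝ) : ℂ))^3*((Real.cos α : ℂ))^3 + (3/8)*(z)^3*((starRingEnd ℂ) z)*(GG α z)^2*((((Complex.normSq z)⁻¹ : ℝ) : ℂ))^3 + (7/8)*(z)^3*((starRingEnd ℂ) z)*(GG α z)^2*((((Complex.normSq z)⁻¹ : ℝ) : ℂ))^3*((Real.sin α : ℂ))*(Complex.I) + (5/8)*(z)^3*((starRingEnd ℂ) z)*(GG α z)^2*((((Complex.normSq z)⁻¹ : ℝ) : ℂ))^3*((Real.sin α : ℂ))^2*(Complex.I)^2 + (1/8)*(z)^3*((starRingEnd ℂ) z)*(GG α z)^2*((((Complex.normSq z)⁻¹ : ℝ) : ℂ))^3*((Real.sin α : ℂ))^3*(Complex.I)^3 + (-7/8)*(z)^3*((starRingEnd ℂ) z)*(GG α z)^2*((((Complex.normSq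 z)⁻¹ : ℝ) : ℂ))^3*((Real.cos α : ℂ)) + (-5/4)*(z)^3*((starRingEnd ℂ) z)*(GG α z)^2*((((Complex.normSq z)⁻¹ : ℝ) : ℂ))^3*((Real.cos α : ℂ))*((Real.sin α : ℂ))*(Complex.I) + (-3/8)*(z)^3*((starRingEnd ℂ) z)*(GG α z)^2*((((Complex.normSq z)⁻¹ : ℝ) : ℂ))^3*((Real.cos α : ℂ))*((Real.sin α : ℂ))^2*(Complex.I)^2 + (5/8)*(z)^3*((starRingEnd ℂ) z)*(GG α z)^2*((((Complex.normSq z)⁻¹ : ℝ) : ℂ))^3*((Real.cos α : ℂ))^2 + (3/8)*(z)^3*((starRingEnd ℂ) z)*(GG α z)^2*((((Complex.normSq z)⁻¹ : ℝ) : ℂ))^3*((Real.cos α : ℂ))^2*((Real.sin α : ℂ))*(Complex.I) + (-1/8)*(z)^3*((starRingEnd ℂ) z)*(GG α z)^2*((((Complex.normSq z)⁻¹ : ℝ) : ℂ))^3*((Real.cos α : ℂ))^3) * hzzb +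
    ((-3/4)*((MMval α z : ℂ)) + (-5/4)*((Real.sin α : ℂ))*((MMval α z : ℂ))*(Complex.I) + (1)*((Real.cos α : ℂ))*((MMval α z : ℂ)) + (3/4)*((Real.cos α : ℂ))*((Real.sin α : ℂ))*((MMval α z : ℂ))*(Complex.I) + (-1/4)*((Real.cos α : ℂ))^2*((MMval α z : ℂ)) + (3/8)*(GG α z)*((starRingEnd ℂ) (GG α z)) + (9/8)*(GG α z)*((starRingEnd ℂ) (GG α z))*((Real.sin α : ℂ))*(Complex.I) + (5/8)*(GG α z)*((starRingEnd ℂ) (GG α z))*((Real.sin α : ℂ))^2*(Complex.I)^2 + (-1/8)*(GG α z)*((starRingEnd ℂ) (GG α z))*((Real.sin α : ℂ))^3*(Complex.I)^3 + (-1/8)*(GG α z)*((starRingEnd ℂ) (GG α z))*((Real.cos α : ℂ)) + (1/4)*(GG α z)*((starRingEnd ℂ) (GG α z))*((Real.cos α : ℂ))*((Real.sin α : ℂ))*(Complex.I) + (-1/8)*(GG α z)*((starRingEnd ℂ) (GG α z))*((Real.cos α : ℂ))*((Real.sin α : ℂ))^2*(Complex.I)^2 + (-3/8)*(GG α z)*((starRingEnd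 ℂ) (GG α z))*((Real.cos α : ℂ))^2 + (1/8)*(GG α z)*((starRingEnd ℂ) (GG α z))*((Real.cos α : ℂ))^2*((Real.sin α : ℂ))*(Complex.I) + (1/8)*(GG α z)*((starRingEnd ℂ) (GG α z))*((Real.cos α : ℂ))^3 + (1/8)*((starRingEnd ℂ) z)^2*((starRingEnd ℂ) (GG α z))^2*((((Complex.normSq z)⁻¹ : ℝ) : ℂ)) + (-1/8)*((starRingEnd ℂ) z)^2*((starRingEnd ℂ) (GG α z))^2*((((Complex.normSq z)⁻¹ : ℝ) : ℂ))*((Real.sin α : ℂ))*(Complex.I) + (-1/8)*((starRingEnd ℂ) z)^2*((starRingEnd ℂ) (GG α z))^2*((((Complex.normSq z)⁻¹ : ℝ) : ℂ))*((Real.sin α : ℂ))^2*(Complex.I)^2 + (1/8)*((starRingEnd ℂ) z)^2*((starRingEnd ℂ) (GG α z))^2*((((Complex.normSq z)⁻¹ : ℝ) : ℂ))*((Real.sin α : ℂ))^3*(Complex.I)^3 + (-1/8)*((starRingEnd ℂ) z)^2*((starRingEnd ℂ) (GG α z))^2*((((Complex.normSq z)⁻¹ : ℝ) : ℂ))*((Real.cos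 α : ℂ)) + (-1/4)*((starRingEnd ℂ) z)^2*((starRingEnd ℂ) (GG α z))^2*((((Complex.normSq z)⁻¹ : ℝ) : ℂ))*((Real.cos α : ℂ))*((Real.sin α : ℂ))*(Complex.I) + (3/8)*((starRingEnd ℂ) z)^2*((starRingEnd ℂ) (GG α z))^2*((((Complex.normSq z)⁻¹ : ℝ) : ℂ))*((Real.cos α : ℂ))*((Real.sin α : ℂ))^2*(Complex.I)^2 + (-1/8)*((starRingEnd ℂ) z)^2*((starRingEnd ℂ) (GG α z))^2*((((Complex.normSq z)⁻¹ : ℝ) : ℂ))*((Real.cos α : ℂ))^2 + (3/8)*((starRingEnd ℂ) z)^2*((starRingEnd ℂ) (GG α z))^2*((((Complex.normSq z)⁻¹ : ℝ) : ℂ))*((Real.cos α : ℂ))^2*((Real.sin α : ℂ))*(Complex.I) + (1/8)*((starRingEnd ℂ) z)^2*((starRingEnd ℂ) (GG α z))^2*((((Complex.normSq z)⁻¹ : ℝ) : ℂ))*((Real.cos α : ℂ))^3 + (-3/4)*(z)*((starRingEnd ℂ) z)*((((Complex.normSq z)⁻¹ : ℝ) : ℂ))*((MMval α z : ℂ)) +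 (-1/4)*(z)*((starRingEnd ℂ) z)*((((Complex.normSq z)⁻¹ : ℝ) : ℂ))*((Real.sin α : ℂ))*((MMval α z : ℂ))*(Complex.I) + (1)*(z)*((starRingEnd ℂ) z)*((((Complex.normSq z)⁻¹ : ℝ) : ℂ))*((Real.cos α : ℂ))*((MMval α z : ℂ)) + (1/4)*(z)*((starRingEnd ℂ) z)*((((Complex.normSq z)⁻¹ : ℝ) : ℂ))*((Real.cos α : ℂ))*((Real.sin α : ℂ))*((MMval α z : ℂ))*(Complex.I) + (-1/4)*(z)*((starRingEnd ℂ) z)*((((Complex.normSq z)⁻¹ : ℝ) : ℂ))*((Real.cos α : ℂ))^2*((MMval α z : ℂ)) + (-1/2)*(z)*((starRingEnd ℂ) z)*(GG α z)*((starRingEnd ℂ) (GG α z))*((((Complex.normSq z)⁻¹ : ℝ) : ℂ)) + (-1)*(z)*((starRingEnd ℂ) z)*(GG α z)*((starRingEnd ℂ) (GG α z))*((((Complex.normSq z)⁻¹ : ℝ) : ℂ))*((Real.sin α : ℂ))*(Complex.I) + (-1/2)*(z)*((starRingEnd ℂ) z)*(GG α z)*((starRingEnd ℂ) (GG α z))*((((Complex.normSq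 z)⁻¹ : ℝ) : ℂ))*((Real.sin α : ℂ))^2*(Complex.I)^2 + (1/4)*(z)*((starRingEnd ℂ) z)*(GG α z)*((starRingEnd ℂ) (GG α z))*((((Complex.normSq z)⁻¹ : ℝ) : ℂ))*((Real.cos α : ℂ)) + (1/2)*(z)*((starRingEnd ℂ) z)*(GG α z)*((starRingEnd ℂ) (GG α z))*((((Complex.normSq z)⁻¹ : ℝ) : ℂ))*((Real.cos α : ℂ))*((Real.sin α : ℂ))*(Complex.I) + (1/4)*(z)*((starRingEnd ℂ) z)*(GG α z)*((starRingEnd ℂ) (GG α z))*((((Complex.normSq z)⁻¹ : ℝ) : ℂ))*((Real.cos α : ℂ))*((Real.sin α : ℂ))^2*(Complex.I)^2 + (1/2)*(z)*((starRingEnd ℂ) z)*(GG α z)*((starRingEnd ℂ) (GG α z))*((((Complex.normSq z)⁻¹ : ℝ) : ℂ))*((Real.cos α : ℂ))^2 + (-1/4)*(z)*((starRingEnd ℂ) z)*(GG α z)*((starRingEnd ℂ) (GG α z))*((((Complex.normSq z)⁻¹ : ℝ) : ℂ))*((Real.cos α : ℂ))^3 + (-3/8)*(z)^2*(GG α z)^2*((((Complex.normSq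 z)⁻¹ : ℝ) : ℂ)) + (-1/8)*(z)^2*(GG α z)^2*((((Complex.normSq z)⁻¹ : ℝ) : ℂ))*((Real.sin α : ℂ))*(Complex.I) + (-7/8)*(z)^2*(GG α z)^2*((((Complex.normSq z)⁻¹ : ℝ) : ℂ))*((Real.sin α : ℂ))^2*(Complex.I)^2 + (-1/8)*(z)^2*(GG α z)^2*((((Complex.normSq z)⁻¹ : ℝ) : ℂ))*((Real.sin α : ℂ))^3*(Complex.I)^3 + (3/8)*(z)^2*(GG α z)^2*((((Complex.normSq z)⁻¹ : ℝ) : ℂ))*((Real.cos α : ℂ)) + (1/2)*(z)^2*(GG α z)^2*((((Complex.normSq z)⁻¹ : ℝ) : ℂ))*((Real.cos α : ℂ))*((Real.sin α : ℂ))*(Complex.I) + (3/8)*(z)^2*(GG α z)^2*((((Complex.normSq z)⁻¹ : ℝ) : ℂ))*((Real.cos α : ℂ))*((Real.sin α : ℂ))^2*(Complex.I)^2 + (3/8)*(z)^2*(GG α z)^2*((((Complex.normSq z)⁻¹ : ℝ) : ℂ))*((Real.cos α : ℂ))^2 + (1/8)*(z)^2*(GG α z)^2*((((Complex.normSq z)⁻¹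 : ℝ) : ℂ))*((Real.cos α : ℂ))^2*((Real.sin α : ℂ))*(Complex.I) + (-3/8)*(z)^2*(GG α z)^2*((((Complex.normSq z)⁻¹ : ℝ) : ℂ))*((Real.cos α : ℂ))^3 + (-3/8)*(z)^2*((starRingEnd ℂ) z)^2*(GG α z)*((starRingEnd ℂ) (GG α z))*((((Complex.normSq z)⁻¹ : ℝ) : ℂ))^2 + (-1/8)*(z)^2*((starRingEnd ℂ) z)^2*(GG α z)*((starRingEnd ℂ) (GG α z))*((((Complex.normSq z)⁻¹ : ℝ) : ℂ))^2*((Real.sin α : ℂ))*(Complex.I) + (3/8)*(z)^2*((starRingEnd ℂ) z)^2*(GG α z)*((starRingEnd ℂ) (GG α z))*((((Complex.normSq z)⁻¹ : ℝ) : ℂ))^2*((Real.sin α : ℂ))^2*(Complex.I)^2 + (1/8)*(z)^2*((starRingEnd ℂ) z)^2*(GG α z)*((starRingEnd ℂ) (GG α z))*((((Complex.normSq z)⁻¹ : ℝ) : ℂ))^2*((Real.sin α : ℂ))^3*(Complex.I)^3 + (7/8)*(z)^2*((starRingEnd ℂ) z)^2*(GG α z)*((starRingEnd ℂ) (GG α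 z))*((((Complex.normSq z)⁻¹ : ℝ) : ℂ))^2*((Real.cos α : ℂ)) + (1/4)*(z)^2*((starRingEnd ℂ) z)^2*(GG α z)*((starRingEnd ℂ) (GG α z))*((((Complex.normSq z)⁻¹ : ℝ) : ℂ))^2*((Real.cos α : ℂ))*((Real.sin α : ℂ))*(Complex.I) + (-1/8)*(z)^2*((starRingEnd ℂ) z)^2*(GG α z)*((starRingEnd ℂ) (GG α z))*((((Complex.normSq z)⁻¹ : ℝ) : ℂ))^2*((Real.cos α : ℂ))*((Real.sin α : ℂ))^2*(Complex.I)^2 + (-5/8)*(z)^2*((starRingEnd ℂ) z)^2*(GG α z)*((starRingEnd ℂ) (GG α z))*((((Complex.normSq z)⁻¹ : ℝ) : ℂ))^2*((Real.cos α : ℂ))^2 + (-1/8)*(z)^2*((starRingEnd ℂ) z)^2*(GG α z)*((starRingEnd ℂ) (GG α z))*((((Complex.normSq z)⁻¹ : ℝ) : ℂ))^2*((Real.cos α : ℂ))^2*((Real.sin α : ℂ))*(Complex.I) + (1/8)*(z)^2*((starRingEnd ℂ) z)^2*(GG α z)*((starRingEnd ℂ) (GG α z))*((((Complex.normSq z)⁻¹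 : ℝ) : ℂ))^2*((Real.cos α : ℂ))^3 + (3/8)*(z)^3*((starRingEnd ℂ) z)*(GG α z)^2*((((Complex.normSq z)⁻¹ : ℝ) : ℂ))^2 + (7/8)*(z)^3*((starRingEnd ℂ) z)*(GG α z)^2*((((Complex.normSq z)⁻¹ : ℝ) : ℂ))^2*((Real.sin α : ℂ))*(Complex.I) + (5/8)*(z)^3*((starRingEnd ℂ) z)*(GG α z)^2*((((Complex.normSq z)⁻¹ : ℝ) : ℂ))^2*((Real.sin α : ℂ))^2*(Complex.I)^2 + (1/8)*(z)^3*((starRingEnd ℂ) z)*(GG α z)^2*((((Complex.normSq z)⁻¹ : ℝ) : ℂ))^2*((Real.sin α : ℂ))^3*(Complex.I)^3 + (-7/8)*(z)^3*((starRingEnd ℂ) z)*(GG α z)^2*((((Complex.normSq z)⁻¹ : ℝ) : ℂ))^2*((Real.cos α : ℂ)) + (-5/4)*(z)^3*((starRingEnd ℂ) z)*(GG α z)^2*((((Complex.normSq z)⁻¹ : ℝ) : ℂ))^2*((Real.cos α : ℂ))*((Real.sin α : ℂ))*(Complex.I) + (-3/8)*(z)^3*((starRingEnd ℂ) z)*(GG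 α z)^2*((((Complex.normSq z)⁻¹ : ℝ) : ℂ))^2*((Real.cos α : ℂ))*((Real.sin α : ℂ))^2*(Complex.I)^2 + (5/8)*(z)^3*((starRingEnd ℂ) z)*(GG α z)^2*((((Complex.normSq z)⁻¹ : ℝ) : ℂ))^2*((Real.cos α : ℂ))^2 + (3/8)*(z)^3*((starRingEnd ℂ) z)*(GG α z)^2*((((Complex.normSq z)⁻¹ : ℝ) : ℂ))^2*((Real.cos α : ℂ))^2*((Real.sin α : ℂ))*(Complex.I) + (-1/8)*(z)^3*((starRingEnd ℂ) z)*(GG α z)^2*((((Complex.normSq z)⁻¹ : ℝ) : ℂ))^2*((Real.cos α : ℂ))^3) * hNnI +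
    ((3/8) + (9/8)*((Real.sin α : ℂ))*(Complex.I) + (5/8)*((Real.sin α : ℂ))^2*(Complex.I)^2 + (-1/8)*((Real.sin α : ℂ))^3*(Complex.I)^3 + (-1/8)*((Real.cos α : ℂ)) + (1/4)*((Real.cos α : ℂ))*((Real.sin α : ℂ))*(Complex.I) + (-1/8)*((Real.cos α : ℂ))*((Real.sin α : ℂ))^2*(Complex.I)^2 + (-3/8)*((Real.cos α : ℂ))^2 + (1/8)*((Real.cos α : ℂ))^2*((Real.sin α : ℂ))*(Complex.I) + (1/8)*((Real.cos α : ℂ))^3 + (-1/2)*(z)*((starRingEnd ℂ) z)*((((Complex.normSq z)⁻¹ : ℝ) : ℂ)) + (-1)*(z)*((starRingEnd ℂ) z)*((((Complex.normSq z)⁻¹ : ℝ) : ℂ))*((Real.sin α : ℂ))*(Complex.I) + (-1/2)*(z)*((starRingEnd ℂ) z)*((((Complex.normSq z)⁻¹ : ℝ) : ℂ))*((Real.sin α : ℂ))^2*(Complex.I)^2 + (1/4)*(z)*((starRingEnd ℂ) z)*((((Complex.normSq z)⁻¹ : ℝ) : ℂ))*((Real.cos α : ℂ)) + (1/2)*(z)*((starRingEnd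 ℂ) z)*((((Complex.normSq z)⁻¹ : ℝ) : ℂ))*((Real.cos α : ℂ))*((Real.sin α : ℂ))*(Complex.I) + (1/4)*(z)*((starRingEnd ℂ) z)*((((Complex.normSq z)⁻¹ : ℝ) : ℂ))*((Real.cos α : ℂ))*((Real.sin α : ℂ))^2*(Complex.I)^2 + (1/2)*(z)*((starRingEnd ℂ) z)*((((Complex.normSq z)⁻¹ : ℝ) : ℂ))*((Real.cos α : ℂ))^2 + (-1/4)*(z)*((starRingEnd ℂ) z)*((((Complex.normSq z)⁻¹ : ℝ) : ℂ))*((Real.cos α : ℂ))^3 + (-3/8)*(z)^2*((starRingEnd ℂ) z)^2*((((Complex.normSq z)⁻¹ : ℝ) : ℂ))^2 + (-1/8)*(z)^2*((starRingEnd ℂ) z)^2*((((Complex.normSq z)⁻¹ : ℝ) : ℂ))^2*((Real.sin α : ℂ))*(Complex.I) + (3/8)*(z)^2*((starRingEnd ℂ) z)^2*((((Complex.normSq z)⁻¹ : ℝ) : ℂ))^2*((Real.sin α : ℂ))^2*(Complex.I)^2 + (1/8)*(z)^2*((starRingEnd ℂ) z)^2*((((Complex.normSq z)⁻¹ : ℝ)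 : ℂ))^2*((Real.sin α : ℂ))^3*(Complex.I)^3 + (7/8)*(z)^2*((starRingEnd ℂ) z)^2*((((Complex.normSq z)⁻¹ : ℝ) : ℂ))^2*((Real.cos α : ℂ)) + (1/4)*(z)^2*((starRingEnd ℂ) z)^2*((((Complex.normSq z)⁻¹ : ℝ) : ℂ))^2*((Real.cos α : ℂ))*((Real.sin α : ℂ))*(Complex.I) + (-1/8)*(z)^2*((starRingEnd ℂ) z)^2*((((Complex.normSq z)⁻¹ : ℝ) : ℂ))^2*((Real.cos α : ℂ))*((Real.sin α : ℂ))^2*(Complex.I)^2 + (-5/8)*(z)^2*((starRingEnd ℂ) z)^2*((((Complex.normSq z)⁻¹ : ℝ) : ℂ))^2*((Real.cos α : ℂ))^2 + (-1/8)*(z)^2*((starRingEnd ℂ) z)^2*((((Complex.normSq z)⁻¹ : ℝ) : ℂ))^2*((Real.cos α : ℂ))^2*((Real.sin α : ℂ))*(Complex.I) + (1/8)*(z)^2*((starRingEnd ℂ) z)^2*((((Complex.normSq z)⁻¹ : ℝ) : ℂ))^2*((Real.cos α : ℂ))^3) * hggb' +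
    ((5/8)*((MMval α z : ℂ))*(Complex.I)^2 + (-1/8)*((Real.sin α : ℂ))*((MMval α z : ℂ))*(Complex.I)^3 + (-1/8)*((Real.cos α : ℂ))*((MMval α z : ℂ))*(Complex.I)^2 + (-1/4)*((starRingEnd ℂ) z)^2*((starRingEnd ℂ) (GG α z))^2*((((Complex.normSq z)⁻¹ : ℝ) : ℂ)) + (-1/4)*((starRingEnd ℂ) z)^2*((starRingEnd ℂ) (GG α z))^2*((((Complex.normSq z)⁻¹ : ℝ) : ℂ))*(Complex.I)^2 + (-1/2)*(z)*((starRingEnd ℂ) z)*((((Complex.normSq z)⁻¹ : ℝ) : ℂ))*((MMval α z : ℂ))*(Complex.I)^2 + (1/4)*(z)*((starRingEnd ℂ) z)*((((Complex.normSq z)⁻¹ : ℝ) : ℂ))*((Real.cos α : ℂ))*((MMval α z : ℂ))*(Complex.I)^2 + (-1/4)*(z)^2*(GG α z)^2*((((Complex.normSq z)⁻¹ : ℝ) : ℂ)) + (-7/8)*(z)^2*(GG α z)^2*((((Complex.normSq z)⁻¹ : ℝ) : ℂ))*(Complex.I)^2 + (-1/8)*(z)^2*(GG α z)^2*((((Complex.normSq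 z)⁻¹ : ℝ) : ℂ))*((Real.sin α : ℂ))*(Complex.I)^3 + (3/8)*(z)^2*(GG α z)^2*((((Complex.normSq z)⁻¹ : ℝ) : ℂ))*((Real.cos α : ℂ))*(Complex.I)^2 + (3/8)*(z)^2*((starRingEnd ℂ) z)^2*((((Complex.normSq z)⁻¹ : ℝ) : ℂ))^2*((MMval α z : ℂ))*(Complex.I)^2 + (1/8)*(z)^2*((starRingEnd ℂ) z)^2*((((Complex.normSq z)⁻¹ : ℝ) : ℂ))^2*((Real.sin α : ℂ))*((MMval α z : ℂ))*(Complex.I)^3 + (-1/8)*(z)^2*((starRingEnd ℂ) z)^2*((((Complex.normSq z)⁻¹ : ℝ) : ℂ))^2*((Real.cos α : ℂ))*((MMval α z : ℂ))*(Complex.I)^2 + (5/8)*(z)^3*((starRingEnd ℂ) z)*(GG α z)^2*((((Complex.normSq z)⁻¹ : ℝ) : ℂ))^2*(Complex.I)^2 + (1/8)*(z)^3*((starRingEnd ℂ) z)*(GG α z)^2*((((Complex.normSq z)⁻¹ : ℝ) : ℂ))^2*((Real.sin α : ℂ))*(Complex.I)^3 + (-3/8)*(z)^3*((starRingEnd ℂ)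 z)*(GG α z)^2*((((Complex.normSq z)⁻¹ : ℝ) : ℂ))^2*((Real.cos α : ℂ))*(Complex.I)^2) * hpy

lemma rpow_eq (α : ℝ) {z : ℂ} (hz : z ≠ 0) :
    (‖z‖) ^ (-4 + 2 * Real.cos α) = MMval α z * (Complex.normSq z)⁻¹ := by
  have hrpos : 0 < ‖z‖ := norm_pos_iff.mpr hz
  have hlog : Real.log (Complex.normSq z) = 2 * Real.log (‖z‖) := by
    rw [Complex.normSq_eq_norm_sq, Real.log_pow]; push_cast; ring
  have hMM : MMval α z = ‖z‖ ^ (2 * Real.cos α - 2) := by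
    rw [MMval, hlog, Real.rpow_def_of_pos hrpos]; ring_nf
  have hN : (Complex.normSq z : ℝ) = ‖z‖ ^ ((2:ℝ)) := by
    rw [Complex.normSq_eq_norm_sq, ← Real.rpow_natCast]; norm_num
  rw [hMM, hN, ← Real.rpow_neg hrpos.le, ← Real.rpow_add hrpos]
  ring_nf

lemma pointwise (α : ℝ) {x : E2} (hx : x ≠ 0) :
    (inner ℝ (fderiv ℝ (uA α) x (uA α x)) (rotFlow x) : ℝ)
      = Real.sin (2 * α) / 2 * ‖x‖ ^ (-4 + 2 * Real.cos α) := by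
  set z := iso.symm x with hzdef
  have hz : z ≠ 0 := isoSymm_ne_zero hx
  have hxz : iso z = x := iso.apply_symm_apply x
  have hmid : HasFDerivAt (UU α) (WL (AA α z) (BB α z)) (iso.symm x) := hasFDerivAt_UU α hz
  have hin : HasFDerivAt (fun y : E2 => iso.symm y)
      (iso.symm.toContinuousLinearEquiv : E2 →L[ℝ] ℂ) x :=
    iso.symm.toContinuousLinearEquiv.hasFDerivAt
  have hout : HasFDerivAt (fun w : ℂ => iso w)
      (iso.toContinuousLinearEquiv : ℂ →L[ℝ] E2) (UU α (iso.symm x)) :=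
    iso.toContinuousLinearEquiv.hasFDerivAt
  have hcomp := hout.comp x (hmid.comp x hin)
  have heq : uA α =ᶠ[nhds x] (fun y : E2 => iso (UU α (iso.symm y))) := by
    filter_upwards [IsOpen.mem_nhds isOpen_ne hx] with y hy
    have h1 : iso (iso.symm y) = y := iso.apply_symm_apply y
    conv_lhs => rw [← h1]
    exact uA_eq α (isoSymm_ne_zero hy)
  have hfd : fderiv ℝ (uA α) x = _ := (heq.fderiv_eq).trans hcomp.fderiv
  have hu : uA α x = iso (UU α z) := by rw [← hxz]; exact uA_eq α hz
  rw [hfd, hu]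
  simp only [ContinuousLinearMap.comp_apply, ContinuousLinearEquiv.coe_coe,
    LinearIsometryEquiv.coe_toContinuousLinearEquiv, LinearIsometryEquiv.symm_apply_apply]
  rw [← hxz]
  set W : ℂ := WL (AA α z) (BB α z) (UU α z) with hW
  have hWeq : W = AA α z * UU α z + BB α z * (starRingEnd ℂ) (UU α z) := by
    rw [hW, WL_apply]
  have hKW := keyW α hz
  rw [← hWeq] at hKW
  have hIm := congrArg Complex.im hKW
  simp only [Complex.add_im, Complex.mul_im, Complex.conj_re, Complex.conj_im,
    Complex.add_conj, Complex.ofReal_im, Complex.I_re, Complex.I_im, Complex.ofReal_re,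
    mul_zero, mul_one, zero_add, add_zero, zero_mul, neg_mul] at hIm
  have hNpos : (0:ℝ) < Complex.normSq z := Complex.normSq_pos.mpr hz
  simp only [rotFlow, perp, PiLp.inner_apply, RCLike.inner_apply, starRingEnd_apply,
    star_trivial, Fin.sum_univ_two, PiLp.smul_apply, smul_eq_mul,
    WithLp.equiv_symm_apply, PiLp.toLp_apply, Matrix.cons_val_zero, Matrix.cons_val_one, Matrix.head_cons,
    iso_apply_zero, iso_apply_one, norm_iso, Complex.sq_norm]
  rw [rpow_eq α hz, Real.sin_two_mul]
  field_simp
  linear_combination hIm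

/-- `(u_α·∇u_α)·ū = (sin 2α / 2) r^{-4+2 cos α}` pointwise, and
`∫_{ℝ²∖B(0,1)} (u_α·∇u_α)·ū = π sin 2α / (2 - 2 cos α)`. -/
theorem stmt12 (α : ℝ) (hα : 0 < α) :
    (∀ x : E2, x ≠ 0 →
      (inner ℝ (fderiv ℝ (uA α) x (uA α x)) (rotFlow x) : ℝ)
        = Real.sin (2 * α) / 2 * ‖x‖ ^ (-4 + 2 * Real.cos α)) ∧
    ∫ x in {x : E2 | 1 < ‖x‖}, (inner ℝ (fderiv ℝ (uA α) x (uA α x)) (rotFlow x) : ℝ)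
      = Real.pi * Real.sin (2 * α) / (2 - 2 * Real.cos α) := by
  refine ⟨fun x hx => pointwise α hx, ?_⟩
  have hS : MeasurableSet {x : E2 | 1 < ‖x‖} :=
    (isOpen_lt continuous_const continuous_norm).measurableSet
  set C := Real.sin (2 * α) / 2 with hC
  set p := -4 + 2 * Real.cos α with hp
  have hcongr : ∫ x in {x : E2 | 1 < ‖x‖}, (inner ℝ (fderiv ℝ (uA α) x (uA α x)) (rotFlow x) : ℝ)
      = ∫ x in {x : E2 | 1 < ‖x‖}, C * ‖x‖ ^ p := by
    refine setIntegral_congr_fun hS fun x hx => ?_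
    have hx0 : x ≠ 0 := by
      intro h; rw [mem_setOf_eq, h, norm_zero] at hx; linarith
    exact pointwise α hx0
  rw [hcongr]
  by_cases hs : Real.cos α = 1
  · have hsin : Real.sin α = 0 := by
      have h := Real.sin_sq_add_cos_sq α
      have : Real.sin α ^ 2 = 0 := by rw [hs] at h; nlinarith
      exact pow_eq_zero_iff (n := 2) (by norm_num) |>.mp this
    have hsin2 : Real.sin (2 * α) = 0 := by rw [Real.sin_two_mul, hsin]; ring
    rw [hC, hsin2, hs]
    norm_num
  · have hslt : Real.cos α < 1 := lt_of_le_of_ne (Real.cos_le_one α) hs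
    have hind : ∀ x : E2, {x : E2 | 1 < ‖x‖}.indicator (fun x : E2 => C * ‖x‖ ^ p) x
        = (Ioi (1:ℝ)).indicator (fun r : ℝ => C * r ^ p) ‖x‖ := by
      intro x
      by_cases h : 1 < ‖x‖ <;> simp [Set.indicator, h, Set.mem_setOf_eq, Set.mem_Ioi]
    rw [← integral_indicator hS]
    simp_rw [hind]
    rw [MeasureTheory.integral_fun_norm_addHaar volume
      ((Ioi (1:ℝ)).indicator (fun r : ℝ => C * r ^ p))]
    have hdim : Module.finrank ℝ E2 = 2 := finrank_euclideanSpace_fin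
    rw [hdim]
    have hvol : volume.real (Metric.ball (0:E2) 1) = Real.pi := by
      rw [measureReal_def, EuclideanSpace.volume_ball]
      norm_num [Real.sq_sqrt Real.pi_nonneg, Fintype.card_fin, Real.Gamma_two,
        ENNReal.toReal_ofReal Real.pi_nonneg]
    rw [hvol]
    have hsm : ∀ y : ℝ, y ^ (2 - 1) • (Ioi (1:ℝ)).indicator (fun r : ℝ => C * r ^ p) y
        = (Ioi (1:ℝ)).indicator (fun r : ℝ => r * (C * r ^ p)) y := by
      intro y
      by_cases h : y ∈ Ioi (1:ℝ) <;> simp [h, smul_eq_mul]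
    simp_rw [hsm]
    rw [setIntegral_indicator measurableSet_Ioi]
    rw [show Ioi (0:ℝ) ∩ Ioi (1:ℝ) = Ioi (1:ℝ) by
      rw [Set.Ioi_inter_Ioi]; norm_num]
    have hci : ∫ y in Ioi (1:ℝ), y * (C * y ^ p) = C * ∫ y in Ioi (1:ℝ), y ^ (p + 1) := by
      rw [← integral_const_mul]
      refine setIntegral_congr_fun measurableSet_Ioi fun y hy => ?_
      have hy0 : y ≠ 0 := by have : (1:ℝ) < y := hy; linarith
      rw [Real.rpow_add_one hy0]
      ring
    rw [hci, integral_Ioi_rpow_of_lt (by rw [hp]; linarith) one_pos]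
    have h1 : (1:ℝ) ^ (p + 1 + 1) = 1 := Real.one_rpow _
    rw [h1, hC, hp]
    rw [Real.sin_two_mul]
    have hne : 2 - 2 * Real.cos α ≠ 0 := by intro h; apply hs; linarith
    have hne2 : (-4 + 2 * Real.cos α + 1 + 1) ≠ 0 := by intro h; exact hs (by linarith)
    field_simp [hne, hne2]
    have hne3 : -2 + Real.cos α * 2 ≠ 0 := by intro h; apply hs; linarith
    have hinv : (-2 + Real.cos α * 2)⁻¹ * (-2 + Real.cos α * 2) = 1 := inv_mul_cancel₀ hne3
    linear_combination (Real.sin α * Real.cos α * Real.pi) * hinv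

end
end
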